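/- arXiv:2110.02422 — 8 statements merged into one kernel-verified Lean document; each statement's English description precedes it below -/
import Mathlib

section
/- Let $B \geq 1$ and let $T_0, T_1, \dots, T_B$ be exchangeable real-valued random variables such that ties among them occur with probability zero. Define $p = \frac{1}{B+1}\left(1 + \#\{b \in \{1,\dots,B\} : T_0 \leq T_b\}\right)$. Then for every $\alpha \in [0,1]$, $\mathbb{P}(p \leq \alpha) \leq \alpha$. -/
open MeasureTheory
open scoped Classical ENNReal NNReal

/-- Reindexing a filter over `univ` by a permutation preserves cardinality. -/
lemma crt_perm_filter_card {n : ℕ} (σ : Equiv.Perm (Fin n)) (P : Fin n → Prop) :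
    (Finset.univ.filter fun j => P (σ j)).card = (Finset.univ.filter P).card := by
  apply Finset.card_bij (fun j _ => σ j)
  · intro a ha
    simp only [Finset.mem_filter, Finset.mem_univ, true_and] at *
    exact ha
  · intro a _ b _ h
    exact σ.injective h
  · intro b hb
    refine ⟨σ.symm b, ?_, by simp⟩
    simp only [Finset.mem_filter, Finset.mem_univ, true_and,
      Equiv.apply_symm_apply] at *
    exact hb

/-- For injective `f : Fin n → ℝ`, exactly `k` indices have
`#{j : f i ≤ f j} ≤ k` (when `k ≤ n`). -/
lemma crt_rank_count {n : ℕ} (f : Fin n → ℝ) (hf : Function.Injective f)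
    (k : ℕ) (hk : k ≤ n) :
    (Finset.univ.filter fun i =>
      (Finset.univ.filter fun j => f i ≤ f j).card ≤ k).card = k := by
  set g : Fin n → ℕ := fun i => (Finset.univ.filter fun j => f i ≤ f j).card with hg
  have hmono : ∀ i i', f i < f i' → g i' < g i := by
    intro i i' h
    apply Finset.card_lt_card
    constructor
    · intro j hj
      simp only [Finset.mem_filter, Finset.mem_univ, true_and] at *
      linarith
    · intro hsub
      have hi : i ∈ Finset.univ.filter fun j => f i ≤ f j := by simp
      have h2 := hsub hi
      simp only [Finset.mem_filter, Finset.mem_univ, true_and] at h2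
      linarith
  have hginj : Function.Injective g := by
    intro i i' h
    by_contra hne
    have hfne : f i ≠ f i' := fun hfe => hne (hf hfe)
    rcases lt_or_gt_of_ne hfne with hl | hl
    · exact absurd h.symm (Nat.ne_of_lt (hmono _ _ hl))
    · exact absurd h (Nat.ne_of_lt (hmono _ _ hl))
  have hrange : ∀ i, g i ∈ Finset.Icc 1 n := by
    intro i
    simp only [Finset.mem_Icc]
    constructor
    · have : i ∈ Finset.univ.filter fun j => f i ≤ f j := by simp
      exact Finset.card_pos.mpr ⟨i, this⟩
    · calc g i ≤ (Finset.univ : Finset (Fin n)).card := Finset.card_filter_le _ _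
        _ = n := by simp
  have himg : Finset.univ.image g = Finset.Icc 1 n := by
    apply Finset.eq_of_subset_of_card_le
    · intro m hm
      rcases Finset.mem_image.mp hm with ⟨i, _, rfl⟩
      exact hrange i
    · rw [Finset.card_image_of_injective _ hginj]
      simp [Nat.card_Icc]
  have hfilt : (Finset.Icc 1 n).filter (· ≤ k) = Finset.Icc 1 k := by
    ext m
    simp only [Finset.mem_filter, Finset.mem_Icc]
    omega
  have key : ((Finset.univ.image g).filter (· ≤ k)).card
      = ((Finset.univ.filter fun i => g i ≤ k).image g).card := by
    rw [Finset.filter_image]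
  rw [Finset.card_image_of_injective _ hginj] at key
  show (Finset.univ.filter fun i => g i ≤ k).card = k
  rw [← key, himg, hfilt, Nat.card_Icc]
  omega

/-- Validity of the CRT p-value: if `T 0, T 1, ..., T B` are exchangeable real random
variables with no ties a.s., then the p-value
`p = (1 + #{b ≥ 1 : T 0 ≤ T b}) / (B+1)` is super-uniform. -/
theorem crt_pvalue_superuniform
    {Ω : Type*} [MeasurableSpace Ω] (μ : Measure Ω) [IsProbabilityMeasure μ]
    (B : ℕ) (hB : 1 ≤ B) (T : Fin (B + 1) → Ω → ℝ)
    (hmeas : ∀ i, Measurable (T i))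
    (hexch : ∀ σ : Equiv.Perm (Fin (B + 1)),
      Measure.map (fun ω => fun i => T (σ i) ω) μ =
        Measure.map (fun ω => fun i => T i ω) μ)
    (hties : μ {ω | ∃ i j : Fin (B + 1), i ≠ j ∧ T i ω = T j ω} = 0)
    (p : Ω → ℝ)
    (hp : ∀ ω, p ω =
      (1 + ((Finset.univ.filter
        (fun b : Fin (B + 1) => b ≠ 0 ∧ T 0 ω ≤ T b ω)).card : ℝ)) / (B + 1)) :
    ∀ α ∈ Set.Icc (0 : ℝ) 1, μ {ω | p ω ≤ α} ≤ ENNReal.ofReal α := by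
  intro α hα
  obtain ⟨hα0, hα1⟩ := hα
  have hnpos : (0:ℝ) < ((B+1:ℕ):ℝ) := by positivity
  have hnpos' : (0:ℝ) < (B:ℝ) + 1 := by positivity
  set k : ℕ := ⌊α * ((B+1:ℕ):ℝ)⌋₊ with hk
  have hkn : k ≤ B + 1 := by
    have h1 : α * ((B+1:ℕ):ℝ) ≤ ((B+1:ℕ):ℝ) := by nlinarith
    calc k ≤ ⌊((B+1:ℕ):ℝ)⌋₊ := Nat.floor_le_floor h1
      _ = B + 1 := Nat.floor_natCast (B+1)
  -- the rank events
  set A : Fin (B+1) → Set Ω := fun i =>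
    {ω | (Finset.univ.filter fun j => T i ω ≤ T j ω).card ≤ k} with hA
  -- measurability machinery
  have hgmeas : ∀ i : Fin (B+1), Measurable fun x : Fin (B+1) → ℝ =>
      (Finset.univ.filter fun j => x i ≤ x j).card := by
    intro i
    have : (fun x : Fin (B+1) → ℝ => (Finset.univ.filter fun j => x i ≤ x j).card)
        = fun x => ∑ j : Fin (B+1), if x i ≤ x j then 1 else 0 := by
      funext x
      exact Finset.card_filter _ _
    rw [this]
    apply Finset.measurable_sum
    intro j _
    exact Measurable.ite (measurableSet_le (measurable_pi_apply i)
      (measurable_pi_apply j)) measurable_const measurable_const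
  have hSmeas : ∀ i : Fin (B+1), MeasurableSet
      {x : Fin (B+1) → ℝ | (Finset.univ.filter fun j => x i ≤ x j).card ≤ k} := by
    intro i
    exact hgmeas i (by trivial : MeasurableSet {m : ℕ | m ≤ k})
  have hΦmeas : Measurable fun ω => fun j : Fin (B+1) => T j ω :=
    measurable_pi_lambda _ fun j => hmeas j
  have hAmeas : ∀ i, MeasurableSet (A i) := by
    intro i
    exact hΦmeas (hSmeas i)
  -- all rank events have the same probability
  have hA_eq : ∀ i, μ (A i) = μ (A 0) := by
    intro i
    set σ : Equiv.Perm (Fin (B+1)) := Equiv.swap 0 i with hσ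
    have hσ0 : σ 0 = i := Equiv.swap_apply_left 0 i
    have hΦσmeas : Measurable fun ω => fun j : Fin (B+1) => T (σ j) ω :=
      measurable_pi_lambda _ fun j => hmeas (σ j)
    have hpre : A i = (fun ω => fun j : Fin (B+1) => T (σ j) ω) ⁻¹'
        {x : Fin (B+1) → ℝ | (Finset.univ.filter fun j => x 0 ≤ x j).card ≤ k} := by
      ext ω
      simp only [hA, Set.mem_setOf_eq, Set.mem_preimage, hσ0]
      rw [crt_perm_filter_card σ (fun j => T i ω ≤ T j ω)]
    have hpre0 : A 0 = (fun ω => fun j : Fin (B+1) => T j ω) ⁻¹'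
        {x : Fin (B+1) → ℝ | (Finset.univ.filter fun j => x 0 ≤ x j).card ≤ k} := rfl
    rw [hpre, hpre0,
      ← Measure.map_apply hΦσmeas (hSmeas 0),
      ← Measure.map_apply hΦmeas (hSmeas 0), hexch σ]
  -- sum of indicators equals k off the ties set
  have hsum : ∀ᵐ ω ∂μ, ∑ i : Fin (B+1), (A i).indicator (fun _ => (1:ℝ≥0∞)) ω
      = (k : ℝ≥0∞) := by
    rw [ae_iff]
    apply measure_mono_null _ hties
    intro ω hω
    simp only [Set.mem_setOf_eq] at hω ⊢
    by_contra hties'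
    push_neg at hties'
    have hinj : Function.Injective fun i : Fin (B+1) => T i ω := by
      intro i j hij
      by_contra hne
      exact hties' i j hne hij
    apply hω
    have : ∑ i : Fin (B+1), (A i).indicator (fun _ => (1:ℝ≥0∞)) ω
        = ((Finset.univ.filter fun i : Fin (B+1) => ω ∈ A i).card : ℝ≥0∞) := by
      rw [Finset.card_filter]
      push_cast
      apply Finset.sum_congr rfl
      intro i _
      by_cases hi : ω ∈ A i <;> simp [Set.indicator_apply, hi]
    rw [this]
    norm_cast
    exact crt_rank_count (fun i => T i ω) hinj k hkn
  -- total mass computation : n * μ (A 0) = k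
  have htot : ((B+1:ℕ) : ℝ≥0∞) * μ (A 0) = (k : ℝ≥0∞) := by
    have h1 : ∑ i : Fin (B+1), μ (A i) = (k : ℝ≥0∞) := by
      have h2 : ∀ i : Fin (B+1), μ (A i)
          = ∫⁻ ω, (A i).indicator (fun _ => (1:ℝ≥0∞)) ω ∂μ := by
        intro i
        rw [lintegral_indicator (hAmeas i)]
        simp
      calc ∑ i : Fin (B+1), μ (A i)
          = ∑ i : Fin (B+1), ∫⁻ ω, (A i).indicator (fun _ => (1:ℝ≥0∞)) ω ∂μ := by
            exact Finset.sum_congr rfl fun i _ => h2 i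
        _ = ∫⁻ ω, ∑ i : Fin (B+1), (A i).indicator (fun _ => (1:ℝ≥0∞)) ω ∂μ := by
            rw [lintegral_finset_sum]
            intro i _
            exact (measurable_const.indicator (hAmeas i))
        _ = ∫⁻ _, (k : ℝ≥0∞) ∂μ := lintegral_congr_ae hsum
        _ = (k : ℝ≥0∞) := by simp
    calc ((B+1:ℕ) : ℝ≥0∞) * μ (A 0) = ∑ _x : Fin (B+1), μ (A 0) := by
          simp [Finset.sum_const, nsmul_eq_mul]
      _ = ∑ i : Fin (B+1), μ (A i) := Finset.sum_congr rfl fun i _ => (hA_eq i).symm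
      _ = (k : ℝ≥0∞) := h1
  -- the event {p ≤ α} equals A 0
  have hev : {ω | p ω ≤ α} = A 0 := by
    ext ω
    simp only [Set.mem_setOf_eq, hA]
    rw [hp ω]
    have hcard : (Finset.univ.filter fun j : Fin (B+1) => T 0 ω ≤ T j ω)
        = insert 0 (Finset.univ.filter fun b : Fin (B+1) => b ≠ 0 ∧ T 0 ω ≤ T b ω) := by
      ext j
      simp only [Finset.mem_filter, Finset.mem_univ, true_and, Finset.mem_insert]
      constructor
      · intro h
        rcases eq_or_ne j 0 with h0 | h0
        · exact Or.inl h0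
        · exact Or.inr ⟨h0, h⟩
      · rintro (rfl | ⟨-, h⟩)
        · exact le_refl _
        · exact h
    have h0nm : (0 : Fin (B+1)) ∉ Finset.univ.filter
        fun b : Fin (B+1) => b ≠ 0 ∧ T 0 ω ≤ T b ω := by simp
    have hcardeq : (Finset.univ.filter fun j : Fin (B+1) => T 0 ω ≤ T j ω).card
        = 1 + (Finset.univ.filter fun b : Fin (B+1) => b ≠ 0 ∧ T 0 ω ≤ T b ω).card := by
      rw [hcard, Finset.card_insert_of_notMem h0nm]
      omega
    rw [hcardeq]
    set R : ℕ := (Finset.univ.filter fun b : Fin (B+1) => b ≠ 0 ∧ T 0 ω ≤ T b ω).card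
    constructor
    · intro h
      have h' : ((1 + R : ℕ) : ℝ) ≤ α * ((B+1:ℕ):ℝ) := by
        push_cast
        rw [div_le_iff₀ hnpos'] at h
        push_cast at h
        linarith
      exact Nat.le_floor h'
    · intro h
      have h' : ((1 + R : ℕ) : ℝ) ≤ α * ((B+1:ℕ):ℝ) := by
        calc ((1 + R : ℕ) : ℝ) ≤ (k : ℝ) := by exact_mod_cast h
          _ ≤ α * ((B+1:ℕ):ℝ) := Nat.floor_le (by positivity)
      rw [div_le_iff₀ hnpos']
      push_cast at h' ⊢
      linarith
  rw [hev]
  -- conclude:  n * μ (A 0) = k ≤ ofReal α * ((B+1:ℕ):ℝ)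
  have hkle : (k : ℝ≥0∞) ≤ ENNReal.ofReal α * ((B+1:ℕ) : ℝ≥0∞) := by
    have h1 : (k : ℝ) ≤ α * ((B+1:ℕ):ℝ) := Nat.floor_le (by positivity)
    calc (k : ℝ≥0∞) = ENNReal.ofReal (k : ℝ) := by
          rw [ENNReal.ofReal_natCast]
      _ ≤ ENNReal.ofReal (α * ((B+1:ℕ):ℝ)) := ENNReal.ofReal_le_ofReal h1
      _ = ENNReal.ofReal α * ENNReal.ofReal ((B+1:ℕ) : ℝ) := ENNReal.ofReal_mul hα0
      _ = ENNReal.ofReal α * ((B+1:ℕ) : ℝ≥0∞) := by rw [ENNReal.ofReal_natCast]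
  have hmul : ((B+1:ℕ) : ℝ≥0∞) * μ (A 0) ≤ ((B+1:ℕ) : ℝ≥0∞) * ENNReal.ofReal α := by
    rw [htot, mul_comm]
    exact hkle
  have hn0 : ((B+1:ℕ) : ℝ≥0∞) ≠ 0 := by simp
  have hnt : ((B+1:ℕ) : ℝ≥0∞) ≠ ⊤ := by simp
  exact (ENNReal.mul_le_mul_iff_right hn0 hnt).mp hmul
end

section
/- Fix $c, q \in (0,1)$ with $(1-c)q < c$, and p-values $p_1, \dots, p_m$. Let $\hat{k}$ be the Selective SeqStep+ threshold index (as defined by the SeqStep+ rule with parameters $c, q$, with $\hat{k} = 0$ if no valid $k$ exists). Then for every index $j$, $\frac{\mathbf{1}\{j \leq \hat{k}\}}{\#\{i \leq \hat{k} : p_i \leq c\} \vee 1} \leq \frac{1 + \frac{1-c}{c} q}{1 + j}$. -/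
open scoped Classical

/-- Deterministic key bound for FDR control under arbitrary dependence: for the Selective
SeqStep+ threshold `k̂` (with `k̂ = 0` if no valid `k` exists), for every index `j ≥ 1`,
`1{j ≤ k̂} / (#{i ≤ k̂ : p_i ≤ c} ∨ 1) ≤ (1 + (1-c)q/c) / (1 + j)`. -/
theorem seqstep_indicator_ratio_bound
    (c q : ℝ) (hc : c ∈ Set.Ioo (0 : ℝ) 1) (hq : q ∈ Set.Ioo (0 : ℝ) 1)
    (hcq : (1 - c) * q < c)
    (m : ℕ) (p : ℕ → ℝ) (hpv : ∀ j, p j ∈ Set.Icc (0 : ℝ) 1)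
    (khat : ℕ) (hkm : khat ≤ m)
    (hmem : khat = 0 ∨
      (1 + (((Finset.Icc 1 khat).filter (fun i => c < p i)).card : ℝ)) /
          max (((Finset.Icc 1 khat).filter (fun i => p i ≤ c)).card : ℝ) 1 ≤
        (1 - c) / c * q)
    (hmax : ∀ k, 1 ≤ k → k ≤ m →
      (1 + (((Finset.Icc 1 k).filter (fun i => c < p i)).card : ℝ)) /
          max (((Finset.Icc 1 k).filter (fun i => p i ≤ c)).card : ℝ) 1 ≤
        (1 - c) / c * q → k ≤ khat) :
    ∀ j : ℕ, 1 ≤ j →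
      (if j ≤ khat then (1 : ℝ) else 0) /
          max (((Finset.Icc 1 khat).filter (fun i => p i ≤ c)).card : ℝ) 1 ≤
        (1 + (1 - c) / c * q) / (1 + (j : ℝ)) := by
  intro j hj
  have hc0 : (0:ℝ) < c := hc.1
  have hr : (0:ℝ) ≤ (1 - c) / c * q := by
    apply mul_nonneg (div_nonneg (by linarith [hc.2]) hc0.le) hq.1.le
  set M : ℝ := max (((Finset.Icc 1 khat).filter (fun i => p i ≤ c)).card : ℝ) 1 with hM
  have hM1 : (1:ℝ) ≤ M := le_max_right _ _
  have hMpos : (0:ℝ) < M := lt_of_lt_of_le one_pos hM1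
  have hjpos : (0:ℝ) < 1 + (j:ℝ) := by positivity
  by_cases hjk : j ≤ khat
  · simp only [if_pos hjk]
    have hk1 : 1 ≤ khat := le_trans hj hjk
    have hmem' : (1 + (((Finset.Icc 1 khat).filter (fun i => c < p i)).card : ℝ)) / M ≤
        (1 - c) / c * q := by
      rcases hmem with h0 | h; · omega
      · exact h
    have hcard : ((Finset.Icc 1 khat).filter (fun i => p i ≤ c)).card +
        ((Finset.Icc 1 khat).filter (fun i => c < p i)).card = khat := by
      have := Finset.card_filter_add_card_filter_not
        (s := Finset.Icc 1 khat) (p := fun i => p i ≤ c)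
      simpa [not_le, Nat.card_Icc] using this
    set A : ℝ := (((Finset.Icc 1 khat).filter (fun i => p i ≤ c)).card : ℝ)
    set B : ℝ := (((Finset.Icc 1 khat).filter (fun i => c < p i)).card : ℝ)
    have hAB : A + B = (khat : ℝ) := by
      rw [← Nat.cast_add]; exact_mod_cast congrArg Nat.cast hcard
    have hAM : A ≤ M := le_max_left _ _
    have hB : 1 + B ≤ (1 - c) / c * q * M :=
      (div_le_iff₀ hMpos).mp hmem'
    have hjk' : (j:ℝ) ≤ (khat:ℝ) := Nat.cast_le.mpr hjk
    rw [div_le_div_iff₀ hMpos hjpos]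
    nlinarith
  · simp only [if_neg hjk]
    rw [zero_div]
    positivity
end

section
/- Fix real numbers $1 > \alpha > c > 0$ and $\sigma > 0$ with $c - \sigma^2/(\alpha - c) \geq 0$. The optimal value of: maximize $\sum_{i=1}^3 \pi_i \frac{x_i}{1 - x_i}$ over $\pi_i \geq 0$, $x_i \in [0, \alpha]$ subject to $\sum_i \pi_i = 1$, $\sum_i \pi_i x_i = c$, $\sum_i \pi_i (x_i - c)^2 = \sigma^2$, equals $\frac{\alpha}{1-\alpha} - \frac{(\alpha - c)^2}{(1-\alpha)(\sigma^2 + (1-c)(\alpha - c))}$, achieved by $x_1 = c - \frac{\sigma^2}{\alpha - c}$, $x_2 = \alpha$, $\pi_1 = \frac{(\alpha-c)^2}{(\alpha-c)^2 + \sigma^2}$, $\pi_2 = \frac{\sigma^2}{(\alpha-c)^2 + \sigma^2}$, $\pi_3 = 0$. -/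
set_option maxHeartbeats 1000000

/-- The three-point optimization lemma (Lemma A.1): the maximum of
`∑ πᵢ xᵢ/(1-xᵢ)` subject to `πᵢ ≥ 0`, `0 ≤ xᵢ ≤ α`, `∑ πᵢ = 1`, `∑ πᵢ xᵢ = c`,
`∑ πᵢ (xᵢ - c)² = σ²` equals
`α/(1-α) - (α-c)²/((1-α)(σ² + (1-c)(α-c)))`, achieved at the indicated point. -/
theorem three_point_optimization
    (α c σ : ℝ) (hα : α < 1) (hcα : c < α) (hc : 0 < c) (hσ : 0 < σ)
    (hx1 : 0 ≤ c - σ ^ 2 / (α - c)) :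
    IsGreatest
      {v : ℝ | ∃ π x : Fin 3 → ℝ,
        (∀ i, 0 ≤ π i) ∧ (∀ i, 0 ≤ x i ∧ x i ≤ α) ∧
        (∑ i, π i = 1) ∧ (∑ i, π i * x i = c) ∧
        (∑ i, π i * (x i - c) ^ 2 = σ ^ 2) ∧
        v = ∑ i, π i * (x i / (1 - x i))}
      (α / (1 - α) - (α - c) ^ 2 / ((1 - α) * (σ ^ 2 + (1 - c) * (α - c)))) ∧
    (let π : Fin 3 → ℝ :=
        ![(α - c) ^ 2 / ((α - c) ^ 2 + σ ^ 2), σ ^ 2 / ((α - c) ^ 2 + σ ^ 2), 0]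
     let x : Fin 3 → ℝ := ![c - σ ^ 2 / (α - c), α, 0]
     (∑ i, π i = 1) ∧ (∑ i, π i * x i = c) ∧
     (∑ i, π i * (x i - c) ^ 2 = σ ^ 2) ∧
     ∑ i, π i * (x i / (1 - x i)) =
       α / (1 - α) - (α - c) ^ 2 / ((1 - α) * (σ ^ 2 + (1 - c) * (α - c)))) := by
  have hd : 0 < α - c := by linarith
  have hd' : (α - c) ≠ 0 := ne_of_gt hd
  have h1α : 0 < 1 - α := by linarith
  have hs : 0 < σ ^ 2 := by positivity
  have hD : 0 < σ ^ 2 + (1 - c) * (α - c) := by nlinarith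
  have hE : 0 < (α - c) ^ 2 + σ ^ 2 := by positivity
  have hE' : (α - c) ^ 2 + σ ^ 2 ≠ 0 := ne_of_gt hE
  have hD' : σ ^ 2 + (1 - c) * (α - c) ≠ 0 := ne_of_gt hD
  have h1α' : (1 - α) ≠ 0 := ne_of_gt h1α
  set x1 : ℝ := c - σ ^ 2 / (α - c) with hx1def
  have h1x1 : 1 - x1 = (σ ^ 2 + (1 - c) * (α - c)) / (α - c) := by
    rw [hx1def]; field_simp; ring
  have h1x1pos : 0 < 1 - x1 := by rw [h1x1]; positivity
  set C : ℝ := 1 / ((1 - x1) ^ 2 * (1 - α)) with hCdef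
  have hCpos : 0 < C := by rw [hCdef]; positivity
  have hC1 : C * (1 - x1) ^ 2 * (1 - α) = 1 := by
    rw [hCdef]; field_simp [hd', hE', hD', h1α']
  constructor
  · constructor
    · -- membership: the indicated point achieves the value
      refine ⟨![(α - c) ^ 2 / ((α - c) ^ 2 + σ ^ 2), σ ^ 2 / ((α - c) ^ 2 + σ ^ 2), 0],
        ![c - σ ^ 2 / (α - c), α, 0], ?_, ?_, ?_, ?_, ?_, ?_⟩
      · intro i; fin_cases i <;> simp <;> positivity
      · intro i
        have hu : 0 < σ ^ 2 / (α - c) := div_pos hs hd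
        fin_cases i
        · exact ⟨hx1, show c - σ ^ 2 / (α - c) ≤ α by nlinarith⟩
        · exact ⟨show (0:ℝ) ≤ α by linarith, le_refl α⟩
        · exact ⟨le_refl (0:ℝ), show (0:ℝ) ≤ α by linarith⟩
      · simp [Fin.sum_univ_three]
        field_simp [hd', hE', hD', h1α']
      · simp [Fin.sum_univ_three]
        field_simp [hd', hE', hD', h1α']; ring
      · simp [Fin.sum_univ_three]
        field_simp [hd', hE', hD', h1α']; ring
      · simp [Fin.sum_univ_three]
        rw [show (1 : ℝ) - (c - σ ^ 2 / (α - c)) = (σ ^ 2 + (1 - c) * (α - c)) / (α - c) by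
          field_simp [hd', hE', hD', h1α']; ring]
        field_simp [hd', hE', hD', h1α', show σ ^ 2 + (α - c) * (1 - c) ≠ 0 by rw [mul_comm]; exact hD']
        ring
    · -- upper bound
      rintro v ⟨π, x, hπ, hx, hsum1, hsumx, hsumv, hv⟩
      have hq : ∀ i, x i / (1 - x i) ≤ C * (x i) ^ 2 - C * (α + 2 * x1 - 1) * (x i) + C * α * x1 ^ 2 := by
        intro i
        obtain ⟨hxi0, hxiα⟩ := hx i
        have h1xi : 0 < 1 - x i := by linarith
        rw [div_le_iff₀ h1xi]
        have key : (C * (x i) ^ 2 - C * (α + 2 * x1 - 1) * (x i) + C * α * x1 ^ 2) * (1 - x i)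
            - x i = C * (x i - x1) ^ 2 * (α - x i) := by
          linear_combination (x i) * hC1
        nlinarith [mul_nonneg (mul_nonneg hCpos.le (sq_nonneg (x i - x1)))
          (sub_nonneg.2 hxiα)]
      have hsumx2 : ∑ i, π i * (x i) ^ 2 = σ ^ 2 + c ^ 2 := by
        have : ∑ i, π i * (x i - c) ^ 2
            = ∑ i, π i * (x i) ^ 2 - 2 * c * ∑ i, π i * x i + c ^ 2 * ∑ i, π i := by
          rw [Finset.mul_sum, Finset.mul_sum]
          rw [← Finset.sum_sub_distrib, ← Finset.sum_add_distrib]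
          congr 1; ext i; ring
        rw [hsum1, hsumx, hsumv] at this
        linarith
      have hle : v ≤ C * (σ ^ 2 + c ^ 2) - C * (α + 2 * x1 - 1) * c + C * α * x1 ^ 2 := by
        rw [hv]
        calc ∑ i, π i * (x i / (1 - x i))
            ≤ ∑ i, π i * (C * (x i) ^ 2 - C * (α + 2 * x1 - 1) * (x i) + C * α * x1 ^ 2) := by
              apply Finset.sum_le_sum
              intro i _
              exact mul_le_mul_of_nonneg_left (hq i) (hπ i)
          _ = C * (∑ i, π i * (x i) ^ 2) - C * (α + 2 * x1 - 1) * (∑ i, π i * x i)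
              + C * α * x1 ^ 2 * (∑ i, π i) := by
              simp [Fin.sum_univ_three]; ring
          _ = C * (σ ^ 2 + c ^ 2) - C * (α + 2 * x1 - 1) * c + C * α * x1 ^ 2 := by
              rw [hsumx2, hsumx, hsum1]; ring
      have hCval : C = (α - c) ^ 2 / ((1 - α) * (σ ^ 2 + (1 - c) * (α - c)) ^ 2) := by
        rw [hCdef, h1x1]
        rw [div_pow]
        field_simp [hd', hE', hD', h1α']
      have hVeq : C * (σ ^ 2 + c ^ 2) - C * (α + 2 * x1 - 1) * c + C * α * x1 ^ 2
          = α / (1 - α) - (α - c) ^ 2 / ((1 - α) * (σ ^ 2 + (1 - c) * (α - c))) := by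
        rw [hCval, hx1def]
        field_simp [hd', hE', hD', h1α', show σ ^ 2 + (α - c) * (1 - c) ≠ 0 by rw [mul_comm]; exact hD']
        ring
      linarith [hVeq ▸ hle]
  · -- the achievement equalities
    have hrw : c - σ ^ 2 / (α - c) = (c * (α - c) - σ ^ 2) / (α - c) := by
      field_simp [hd', hE', hD', h1α']
    refine ⟨?_, ?_, ?_, ?_⟩
    · simp [Fin.sum_univ_three]
      field_simp [hd', hE', hD', h1α']
    · simp [Fin.sum_univ_three]
      rw [hx1def, hrw]
      field_simp [hd', hE', hD', h1α']; ring
    · simp [Fin.sum_univ_three]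
      rw [hx1def, hrw]
      field_simp [hd', hE', hD', h1α']; ring
    · simp [Fin.sum_univ_three]
      rw [show (1 : ℝ) - x1 = (σ ^ 2 + (1 - c) * (α - c)) / (α - c) from h1x1,
        hx1def, hrw]
      field_simp [hd', hE', hD', h1α', show σ ^ 2 + (α - c) * (1 - c) ≠ 0 by rw [mul_comm]; exact hD']
      ring
end

section
/- Fix $c, q \in (0,1)$ and integer $m \geq 1$, and set $m' = \lfloor \frac{cm}{q + c(1-q)} \rfloor$. The optimal value of: maximize $\sum_{k=0}^{m'} \pi_k \frac{k}{1 + m - k}$ over probability vectors $(\pi_0, \dots, \pi_{m'})$ (i.e., $\pi_k \geq 0$, $\sum_k \pi_k = 1$) subject to $\sum_k k \pi_k \leq cm$, is achieved by a vector supported on $\{0, m'\}$, and the optimal value is at most $\frac{c(q + c(1-q))}{q(1-c)}$. -/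
/-- The LP from the exchangeability proof: maximizing `∑ π_k k/(1+m-k)` over probability
vectors on `{0,...,m'}` with `∑ k π_k ≤ cm` (where `m' = ⌊cm/(q+c(1-q))⌋`) is achieved
by a vector supported on `{0, m'}`, with optimal value at most `c(q+c(1-q))/(q(1-c))`. -/
theorem seqstep_lp_two_point_optimum
    (c q : ℝ) (hc : c ∈ Set.Ioo (0 : ℝ) 1) (hq : q ∈ Set.Ioo (0 : ℝ) 1)
    (m : ℕ) (hm : 1 ≤ m) :
    ∃ π : ℕ → ℝ,
      ((∀ k, 0 ≤ π k) ∧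
        (∑ k ∈ Finset.range (⌊c * m / (q + c * (1 - q))⌋₊ + 1), π k = 1) ∧
        (∑ k ∈ Finset.range (⌊c * m / (q + c * (1 - q))⌋₊ + 1), (k : ℝ) * π k ≤ c * m)) ∧
      (∀ π' : ℕ → ℝ, (∀ k, 0 ≤ π' k) →
        (∑ k ∈ Finset.range (⌊c * m / (q + c * (1 - q))⌋₊ + 1), π' k = 1) →
        (∑ k ∈ Finset.range (⌊c * m / (q + c * (1 - q))⌋₊ + 1), (k : ℝ) * π' k ≤ c * m) →
        ∑ k ∈ Finset.range (⌊c * m / (q + c * (1 - q))⌋₊ + 1),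
            π' k * ((k : ℝ) / (1 + (m : ℝ) - k)) ≤
          ∑ k ∈ Finset.range (⌊c * m / (q + c * (1 - q))⌋₊ + 1),
            π k * ((k : ℝ) / (1 + (m : ℝ) - k))) ∧
      (∀ k, k ≠ 0 → k ≠ ⌊c * m / (q + c * (1 - q))⌋₊ → π k = 0) ∧
      (∑ k ∈ Finset.range (⌊c * m / (q + c * (1 - q))⌋₊ + 1),
          π k * ((k : ℝ) / (1 + (m : ℝ) - k)) ≤
        c * (q + c * (1 - q)) / (q * (1 - c))) := by
  obtain ⟨hc0, hc1⟩ := hc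
  obtain ⟨hq0, hq1⟩ := hq
  set r : ℝ := q + c * (1 - q) with hr_def
  have hr0 : 0 < r := by nlinarith
  have hrc : c < r := by nlinarith
  have hr1 : r < 1 := by nlinarith
  have hm0 : (0 : ℝ) < m := by exact_mod_cast Nat.lt_of_lt_of_le Nat.zero_lt_one hm
  have hcm0 : 0 < c * m := by positivity
  set M : ℕ := ⌊c * m / r⌋₊ with hM_def
  have hMle : (M : ℝ) ≤ c * m / r := Nat.floor_le (by positivity)
  have hMr : (M : ℝ) * r ≤ c * m := (le_div_iff₀ hr0).mp hMle
  have hMm : (M : ℝ) < m := by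
    have : c * m / r < m := by
      rw [div_lt_iff₀ hr0]; nlinarith
    linarith
  set D : ℝ := 1 + (m : ℝ) - M with hD_def
  have hD : 0 < D := by simp only [hD_def]; linarith
  set t : ℝ := min (c * m) M / M with ht_def
  have ht0 : 0 ≤ t := div_nonneg (le_min hcm0.le (Nat.cast_nonneg M)) (Nat.cast_nonneg M)
  have ht1 : t ≤ 1 := div_le_one_of_le₀ (min_le_right _ _) (Nat.cast_nonneg M)
  have htM : t * M = min (c * m) M := by
    rcases eq_or_ne (M : ℝ) 0 with h | h
    · rw [h, mul_zero]
      exact (min_eq_right hcm0.le).symm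
    · rw [ht_def, div_mul_cancel₀ _ h]
  refine ⟨fun k => (if k = 0 then 1 - t else 0) + (if k = M then t else 0), ⟨?_, ?_, ?_⟩, ?_, ?_, ?_⟩
  · intro k
    dsimp only
    split_ifs <;> linarith
  · rw [Finset.sum_add_distrib, Finset.sum_ite_eq' , Finset.sum_ite_eq']
    simp [Nat.lt_succ_iff]
  · have : ∀ k ∈ Finset.range (M + 1),
        (k : ℝ) * ((if k = 0 then 1 - t else 0) + (if k = M then t else 0))
          = (if k = 0 then (k : ℝ) * (1 - t) else 0) + (if k = M then (k : ℝ) * t else 0) := by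
      intro k _
      split_ifs <;> ring
    rw [Finset.sum_congr rfl this, Finset.sum_add_distrib, Finset.sum_ite_eq', Finset.sum_ite_eq']
    simp only [Finset.mem_range, Nat.lt_succ_iff, Nat.zero_le, if_true, le_refl,
      Nat.cast_zero, zero_mul, zero_add]
    rw [mul_comm, htM]
    exact min_le_left _ _
  · -- optimality
    intro π' hnn hsum hmean
    have hval : ∑ k ∈ Finset.range (M + 1),
        ((if k = 0 then 1 - t else 0) + (if k = M then t else 0)) * ((k : ℝ) / (1 + (m : ℝ) - k))
        = min (c * m) M / D := by
      have : ∀ k ∈ Finset.range (M + 1),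
          ((if k = 0 then 1 - t else 0) + (if k = M then t else 0)) * ((k : ℝ) / (1 + (m : ℝ) - k))
          = (if k = 0 then (1 - t) * ((k : ℝ) / (1 + (m : ℝ) - k)) else 0)
            + (if k = M then t * ((k : ℝ) / (1 + (m : ℝ) - k)) else 0) := by
        intro k _; split_ifs <;> ring
      rw [Finset.sum_congr rfl this, Finset.sum_add_distrib, Finset.sum_ite_eq', Finset.sum_ite_eq']
      simp only [Finset.mem_range, Nat.lt_succ_iff, Nat.zero_le, if_true, le_refl,
        Nat.cast_zero, zero_div, mul_zero, zero_add]
      rw [← hD_def, ← mul_div_assoc, htM]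
    rw [hval]
    have hbound1 : ∑ k ∈ Finset.range (M + 1), π' k * ((k : ℝ) / (1 + (m : ℝ) - k))
        ≤ c * m / D := by
      calc ∑ k ∈ Finset.range (M + 1), π' k * ((k : ℝ) / (1 + (m : ℝ) - k))
          ≤ ∑ k ∈ Finset.range (M + 1), (k : ℝ) * π' k / D := by
            apply Finset.sum_le_sum
            intro k hk
            have hkM : (k : ℝ) ≤ M := by
              exact_mod_cast Nat.lt_succ_iff.mp (Finset.mem_range.mp hk)
            have hden : D ≤ 1 + (m : ℝ) - k := by rw [hD_def]; linarith
            have : (k : ℝ) / (1 + (m : ℝ) - k) ≤ (k : ℝ) / D :=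
              div_le_div_of_nonneg_left (Nat.cast_nonneg k) hD hden
            calc π' k * ((k : ℝ) / (1 + (m : ℝ) - k)) ≤ π' k * ((k : ℝ) / D) :=
                  mul_le_mul_of_nonneg_left this (hnn k)
              _ = (k : ℝ) * π' k / D := by ring
        _ = (∑ k ∈ Finset.range (M + 1), (k : ℝ) * π' k) / D := by
              rw [Finset.sum_div]
        _ ≤ c * m / D := by
              apply div_le_div_of_nonneg_right hmean hD.le
    have hbound2 : ∑ k ∈ Finset.range (M + 1), π' k * ((k : ℝ) / (1 + (m : ℝ) - k))
        ≤ (M : ℝ) / D := by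
      calc ∑ k ∈ Finset.range (M + 1), π' k * ((k : ℝ) / (1 + (m : ℝ) - k))
          ≤ ∑ k ∈ Finset.range (M + 1), π' k * ((M : ℝ) / D) := by
            apply Finset.sum_le_sum
            intro k hk
            have hkM : (k : ℝ) ≤ M := by
              exact_mod_cast Nat.lt_succ_iff.mp (Finset.mem_range.mp hk)
            have hden0 : 0 < 1 + (m : ℝ) - k := by linarith
            have hden : D ≤ 1 + (m : ℝ) - k := by rw [hD_def]; linarith
            have h1 : (k : ℝ) / (1 + (m : ℝ) - k) ≤ (M : ℝ) / (1 + (m : ℝ) - k) :=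
              div_le_div_of_nonneg_right hkM hden0.le
            have h2 : (M : ℝ) / (1 + (m : ℝ) - k) ≤ (M : ℝ) / D :=
              div_le_div_of_nonneg_left (Nat.cast_nonneg M) hD hden
            exact mul_le_mul_of_nonneg_left (h1.trans h2) (hnn k)
        _ = (M : ℝ) / D := by rw [← Finset.sum_mul, hsum, one_mul]
    rw [← min_div_div_right hD.le]
    exact le_min hbound1 hbound2
  · intro k hk0 hkM
    simp [hk0, hkM]
  · have hval : ∑ k ∈ Finset.range (M + 1),
        ((if k = 0 then 1 - t else 0) + (if k = M then t else 0)) * ((k : ℝ) / (1 + (m : ℝ) - k))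
        = min (c * m) M / D := by
      have : ∀ k ∈ Finset.range (M + 1),
          ((if k = 0 then 1 - t else 0) + (if k = M then t else 0)) * ((k : ℝ) / (1 + (m : ℝ) - k))
          = (if k = 0 then (1 - t) * ((k : ℝ) / (1 + (m : ℝ) - k)) else 0)
            + (if k = M then t * ((k : ℝ) / (1 + (m : ℝ) - k)) else 0) := by
        intro k _; split_ifs <;> ring
      rw [Finset.sum_congr rfl this, Finset.sum_add_distrib, Finset.sum_ite_eq', Finset.sum_ite_eq']
      simp only [Finset.mem_range, Nat.lt_succ_iff, Nat.zero_le, if_true, le_refl,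
        Nat.cast_zero, zero_div, mul_zero, zero_add]
      rw [← hD_def, ← mul_div_assoc, htM]
    rw [hval]
    have h1 : min (c * m) (M : ℝ) / D ≤ c * m / D :=
      div_le_div_of_nonneg_right (min_le_left _ _) hD.le
    have h2 : c * m / D ≤ c * r / (q * (1 - c)) := by
      rw [div_le_div_iff₀ hD (by nlinarith)]
      have hrcq : r - c = q * (1 - c) := by rw [hr_def]; ring
      have := mul_le_mul_of_nonneg_left hMr hc0.le
      rw [hD_def]
      nlinarith
    linarith
end

section
/- Suppose the ordering of p-values $p_1, \dots, p_m$ is fixed, and there exist constants $\delta \geq 0$, $\epsilon \geq 0$ with $c + \delta < 1$ such that, setting $a_j = \mathbb{P}(p_j \leq c \mid \mathbf{1}\{p_{-j} \leq c\})$ for null $j$, one has $\mathbb{P}(\max_{j \in \mathcal{H}_0} a_j \leq c + \delta) \geq 1 - \epsilon$. Then the random variable $R_\delta = \frac{\#\{j \leq \hat{k},\, j \in \mathcal{H}_0 : p_j \leq c,\, a_j \leq c + \delta\}}{1 + \#\{j \leq \hat{k},\, j \in \mathcal{H}_0 : p_j > c\}}$ satisfies $\mathbb{E}[R_\delta] \leq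 \frac{c + \delta}{1 - c - \delta}$, where $\hat{k}$ is the Selective SeqStep+ threshold. -/
open MeasureTheory ProbabilityTheory
open scoped Classical


noncomputable def sssRatio (b : ℕ → Bool) (k : ℕ) : ℝ :=
  (1 + (((Finset.Icc 1 k).filter fun i => b i = false).card : ℝ)) /
    max (((Finset.Icc 1 k).filter fun i => b i = true).card : ℝ) 1

noncomputable def sssK (t : ℝ) (m : ℕ) (b : ℕ → Bool) : ℕ :=
  if h : ((Finset.Icc 1 m).filter fun k => sssRatio b k ≤ t).Nonempty
  then ((Finset.Icc 1 m).filter fun k => sssRatio b k ≤ t).max' h else 0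

lemma sssK_le (t : ℝ) (m : ℕ) (b : ℕ → Bool) : sssK t m b ≤ m := by
  unfold sssK
  split_ifs with h
  · have := Finset.max'_mem _ h
    simp only [Finset.mem_filter, Finset.mem_Icc] at this
    exact this.1.2
  · exact Nat.zero_le m

lemma le_sssK {t : ℝ} {m : ℕ} {b : ℕ → Bool} {k : ℕ} (h1 : 1 ≤ k) (h2 : k ≤ m)
    (h3 : sssRatio b k ≤ t) : k ≤ sssK t m b := by
  have hk : k ∈ (Finset.Icc 1 m).filter fun k => sssRatio b k ≤ t := by
    simp only [Finset.mem_filter, Finset.mem_Icc]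
    exact ⟨⟨h1, h2⟩, h3⟩
  unfold sssK
  split_ifs with h
  · exact Finset.le_max' _ k hk
  · exact absurd ⟨k, hk⟩ h

lemma sssK_spec (t : ℝ) (m : ℕ) (b : ℕ → Bool) :
    sssK t m b = 0 ∨ (1 ≤ sssK t m b ∧ sssK t m b ≤ m ∧ sssRatio b (sssK t m b) ≤ t) := by
  unfold sssK
  split_ifs with h
  · right
    have := Finset.max'_mem _ h
    simp only [Finset.mem_filter, Finset.mem_Icc] at this
    exact ⟨this.1.1, this.1.2, this.2⟩
  · left; rfl

lemma sssRatio_congr {b b' : ℕ → Bool} {k : ℕ} (h : ∀ i ∈ Finset.Icc 1 k, b i = b' i) :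
    sssRatio b k = sssRatio b' k := by
  unfold sssRatio
  have e1 : (Finset.Icc 1 k).filter (fun i => b i = false)
      = (Finset.Icc 1 k).filter (fun i => b' i = false) :=
    Finset.filter_congr (fun i hi => by rw [h i hi])
  have e2 : (Finset.Icc 1 k).filter (fun i => b i = true)
      = (Finset.Icc 1 k).filter (fun i => b' i = true) :=
    Finset.filter_congr (fun i hi => by rw [h i hi])
  rw [e1, e2]

lemma sssK_congr {t : ℝ} {m : ℕ} {b b' : ℕ → Bool} (h : ∀ i ∈ Finset.Icc 1 m, b i = b' i) :
    sssK t m b = sssK t m b' := by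
  unfold sssK
  have hiff : ∀ k ∈ Finset.Icc 1 m, (sssRatio b k ≤ t ↔ sssRatio b' k ≤ t) := by
    intro k hk
    have : sssRatio b k = sssRatio b' k := by
      apply sssRatio_congr
      intro i hi
      refine h i ?_
      rw [Finset.mem_Icc] at hi hk ⊢
      exact ⟨hi.1, hi.2.trans hk.2⟩
    rw [this]
  rw [Finset.filter_congr hiff]

lemma sum_swap_two {s : Finset ℕ} {j j' : ℕ} (hj : j ∈ s) (hj' : j' ∈ s) (hne : j ≠ j')
    (F G : ℕ → ℕ) (hFG : ∀ i ∈ s, i ≠ j → i ≠ j' → F i = G i)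
    (hswap : F j + F j' = G j + G j') : ∑ i ∈ s, F i = ∑ i ∈ s, G i := by
  have hj'e : j' ∈ s.erase j := Finset.mem_erase.mpr ⟨Ne.symm hne, hj'⟩
  rw [← Finset.add_sum_erase s F hj, ← Finset.add_sum_erase _ F hj'e,
      ← Finset.add_sum_erase s G hj, ← Finset.add_sum_erase _ G hj'e]
  have hsum : ∑ i ∈ (s.erase j).erase j', F i = ∑ i ∈ (s.erase j).erase j', G i := by
    apply Finset.sum_congr rfl
    intro i hi
    have h1 := Finset.mem_erase.mp hi
    have h2 := Finset.mem_erase.mp h1.2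
    exact hFG i h2.2 h2.1 h1.1
  omega

lemma card_filter_swap {s : Finset ℕ} {j j' : ℕ} (hj : j ∈ s) (hj' : j' ∈ s) (hne : j ≠ j')
    {f g : ℕ → Bool} (hfg : ∀ i ∈ s, i ≠ j → i ≠ j' → f i = g i)
    (hfj : f j = true) (hfj' : f j' = false) (hgj : g j = false) (hgj' : g j' = true)
    (v : Bool) :
    (s.filter fun i => f i = v).card = (s.filter fun i => g i = v).card := by
  rw [Finset.card_filter, Finset.card_filter]
  apply sum_swap_two hj hj' hne _ _ (fun i hi h1 h2 => by rw [hfg i hi h1 h2])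
  cases v <;> simp [hfj, hfj', hgj, hgj']

lemma sssK_update_le {t : ℝ} {m : ℕ} {b : ℕ → Bool} {j j' : ℕ} (hne : j ≠ j')
    (hbj : b j = false) (hbj' : b j' = false) (h1j : 1 ≤ j)
    (hjle : j ≤ sssK t m (Function.update b j' true))
    (hj'le : j' ≤ sssK t m (Function.update b j' true)) (h1j' : 1 ≤ j') :
    sssK t m (Function.update b j' true) ≤ sssK t m (Function.update b j true) := by
  rcases sssK_spec t m (Function.update b j' true) with h0 | ⟨hk1, hkm, hkr⟩
  · omega
  · set k2 := sssK t m (Function.update b j' true) with hk2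
    have hjmem : j ∈ Finset.Icc 1 k2 := Finset.mem_Icc.mpr ⟨h1j, hjle⟩
    have hj'mem : j' ∈ Finset.Icc 1 k2 := Finset.mem_Icc.mpr ⟨h1j', hj'le⟩
    have hcard : ∀ v, ((Finset.Icc 1 k2).filter fun i => Function.update b j true i = v).card
        = ((Finset.Icc 1 k2).filter fun i => Function.update b j' true i = v).card := by
      intro v
      refine card_filter_swap hjmem hj'mem hne
        (fun i _ h1 h2 => by rw [Function.update_of_ne h1, Function.update_of_ne h2]) ?_ ?_ ?_ ?_ v
      · rw [Function.update_self]
      · rw [Function.update_of_ne (Ne.symm hne)]; exact hbj'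
      · rw [Function.update_of_ne hne]; exact hbj
      · rw [Function.update_self]
    have hreq : sssRatio (Function.update b j true) k2
        = sssRatio (Function.update b j' true) k2 := by
      unfold sssRatio
      rw [hcard true, hcard false]
    exact le_sssK hk1 hkm (hreq ▸ hkr)

lemma sssK_update_eq {t : ℝ} {m : ℕ} {b : ℕ → Bool} {j j' : ℕ}
    (hbj : b j = false) (hbj' : b j' = false) (h1j : 1 ≤ j) (h1j' : 1 ≤ j')
    (hjle : j ≤ sssK t m (Function.update b j true))
    (hj'le : j' ≤ sssK t m (Function.update b j' true)) :
    sssK t m (Function.update b j true) = sssK t m (Function.update b j' true) := by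
  by_cases hne : j = j'
  · subst hne; rfl
  rcases le_total (sssK t m (Function.update b j true)) (sssK t m (Function.update b j' true))
    with hle | hle
  · exact le_antisymm hle (sssK_update_le hne hbj hbj' h1j (hjle.trans hle) hj'le h1j')
  · exact le_antisymm (sssK_update_le (Ne.symm hne) hbj' hbj h1j' (hj'le.trans hle) hjle h1j) hle

noncomputable def sssG (t : ℝ) (m : ℕ) (H0 : Finset ℕ) (j : ℕ) (bb : ℕ → Bool) : ℝ :=
  (if j ≤ sssK t m (Function.update bb j true) then (1:ℝ) else 0) /
    (1 + (((H0.filter fun i =>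
      i ≠ j ∧ i ≤ sssK t m (Function.update bb j true) ∧ bb i = false)).card : ℝ))

lemma sssG_nonneg (t : ℝ) (m : ℕ) (H0 : Finset ℕ) (j : ℕ) (bb : ℕ → Bool) :
    0 ≤ sssG t m H0 j bb := by
  unfold sssG
  have : (0:ℝ) ≤ ((H0.filter fun i =>
      i ≠ j ∧ i ≤ sssK t m (Function.update bb j true) ∧ bb i = false).card : ℝ) :=
    Nat.cast_nonneg _
  apply div_nonneg
  · split_ifs <;> norm_num
  · linarith

lemma sssG_le_one (t : ℝ) (m : ℕ) (H0 : Finset ℕ) (j : ℕ) (bb : ℕ → Bool) :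
    sssG t m H0 j bb ≤ 1 := by
  unfold sssG
  have h0 : (0:ℝ) ≤ ((H0.filter fun i =>
      i ≠ j ∧ i ≤ sssK t m (Function.update bb j true) ∧ bb i = false).card : ℝ) :=
    Nat.cast_nonneg _
  apply div_le_one_of_le₀
  · split_ifs <;> linarith
  · linarith

lemma sssG_congr {t : ℝ} {m : ℕ} {H0 : Finset ℕ} (hH0 : H0 ⊆ Finset.Icc 1 m) (j : ℕ)
    {bb bb' : ℕ → Bool} (h : ∀ i ∈ Finset.Icc 1 m, i ≠ j → bb i = bb' i) :
    sssG t m H0 j bb = sssG t m H0 j bb' := by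
  have hupd : ∀ i ∈ Finset.Icc 1 m,
      Function.update bb j true i = Function.update bb' j true i := by
    intro i hi
    by_cases hij : i = j
    · subst hij; rw [Function.update_self, Function.update_self]
    · rw [Function.update_of_ne hij, Function.update_of_ne hij]
      exact h i hi hij
  have hK : sssK t m (Function.update bb j true) = sssK t m (Function.update bb' j true) :=
    sssK_congr hupd
  unfold sssG
  rw [hK]
  have hfil : (H0.filter fun i =>
      i ≠ j ∧ i ≤ sssK t m (Function.update bb' j true) ∧ bb i = false)
      = (H0.filter fun i =>
      i ≠ j ∧ i ≤ sssK t m (Function.update bb' j true) ∧ bb' i = false) := by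
    apply Finset.filter_congr
    intro i hi
    by_cases hij : i = j
    · simp [hij]
    · rw [h i (hH0 hi) hij]
  rw [hfil]

lemma sss_sum_le_one (t : ℝ) (m : ℕ) (H0 : Finset ℕ) (hH0 : H0 ⊆ Finset.Icc 1 m)
    (bb : ℕ → Bool) :
    ∑ j ∈ H0, (if bb j = false then (1:ℝ) else 0) * sssG t m H0 j bb ≤ 1 := by
  set S := H0.filter (fun j => bb j = false ∧ j ≤ sssK t m (Function.update bb j true))
    with hS
  have hterm0 : ∀ j ∈ H0, j ∉ S → (if bb j = false then (1:ℝ) else 0) * sssG t m H0 j bb = 0 := by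
    intro j hj hjS
    by_cases hbj : bb j = false
    · by_cases hjK : j ≤ sssK t m (Function.update bb j true)
      · exact absurd (Finset.mem_filter.mpr ⟨hj, hbj, hjK⟩) hjS
      · unfold sssG
        rw [if_neg hjK, zero_div, mul_zero]
    · rw [if_neg hbj, zero_mul]
  by_cases hSne : S.Nonempty
  · obtain ⟨j0, hj0S⟩ := hSne
    have hj0 := Finset.mem_filter.mp hj0S
    set k := sssK t m (Function.update bb j0 true) with hk
    have hone : ∀ j ∈ H0, 1 ≤ j := fun j hj => (Finset.mem_Icc.mp (hH0 hj)).1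
    have hKeq : ∀ j ∈ S, sssK t m (Function.update bb j true) = k := by
      intro j hjS
      have hjm := Finset.mem_filter.mp hjS
      exact sssK_update_eq hjm.2.1 hj0.2.1 (hone j hjm.1) (hone j0 hj0.1) hjm.2.2 hj0.2.2
    set V := H0.filter (fun i => i ≤ k ∧ bb i = false) with hV
    have hSV : S ⊆ V := by
      intro j hjS
      have hjm := Finset.mem_filter.mp hjS
      exact Finset.mem_filter.mpr ⟨hjm.1, (hKeq j hjS) ▸ hjm.2.2, hjm.2.1⟩
    have hVpos : 0 < V.card := Finset.card_pos.mpr ⟨j0, hSV hj0S⟩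
    have hterm : ∀ j ∈ S, (if bb j = false then (1:ℝ) else 0) * sssG t m H0 j bb
        = 1 / (V.card : ℝ) := by
      intro j hjS
      have hjm := Finset.mem_filter.mp hjS
      have hKj := hKeq j hjS
      unfold sssG
      rw [hKj, if_pos hjm.2.1, if_pos (hKj ▸ hjm.2.2), one_mul]
      have hfil : (H0.filter fun i => i ≠ j ∧ i ≤ k ∧ bb i = false) = V.erase j := by
        ext i
        simp only [Finset.mem_filter, Finset.mem_erase, hV]
        tauto
      rw [hfil, Finset.card_erase_of_mem (hSV hjS)]
      have h1V : 1 ≤ V.card := hVpos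
      rw [Nat.cast_sub h1V]
      norm_num
    calc ∑ j ∈ H0, (if bb j = false then (1:ℝ) else 0) * sssG t m H0 j bb
        = ∑ j ∈ S, (if bb j = false then (1:ℝ) else 0) * sssG t m H0 j bb := by
          refine (Finset.sum_subset (Finset.filter_subset _ _) ?_).symm
          intro x hx hxS
          exact hterm0 x hx hxS
      _ = ∑ _j ∈ S, 1 / (V.card : ℝ) := Finset.sum_congr rfl hterm
      _ = (S.card : ℝ) / (V.card : ℝ) := by
          rw [Finset.sum_const, nsmul_eq_mul]
          ring
      _ ≤ 1 := by
          rw [div_le_one (by positivity)]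
          exact_mod_cast Finset.card_le_card hSV
  · rw [Finset.not_nonempty_iff_eq_empty] at hSne
    have : ∀ j ∈ H0, (if bb j = false then (1:ℝ) else 0) * sssG t m H0 j bb = 0 := by
      intro j hj
      exact hterm0 j hj (by rw [hSne]; exact Finset.notMem_empty j)
    rw [Finset.sum_congr rfl this, Finset.sum_const, smul_zero]
    norm_num

lemma integrable_of_bounded_meas {Ω : Type*} {m0 : MeasurableSpace Ω} {μ : Measure Ω}
    [IsFiniteMeasure μ] {f : Ω → ℝ} (hf : Measurable[m0] f) (C : ℝ) (h : ∀ ω, |f ω| ≤ C) :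
    Integrable f μ :=
  ⟨hf.aestronglyMeasurable, HasFiniteIntegral.of_bounded (C := C)
    (ae_of_all _ fun ω => by rw [Real.norm_eq_abs]; exact h ω)⟩


lemma cond_step {Ω : Type*} {m0 : MeasurableSpace Ω} (μ : Measure Ω) [IsProbabilityMeasure μ]
    {𝒢 : MeasurableSpace Ω} (hm0 : 𝒢 ≤ m0) (c δ κ : ℝ) (h1cδ : 0 < 1 - c - δ)
    (hκ : κ = (c + δ) / (1 - c - δ)) (hκ0 : 0 ≤ κ)
    {p : Ω → ℝ} (hp : Measurable[m0] p) (aj : Ω → ℝ)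
    (g : Ω → ℝ) (hgG : Measurable[𝒢] g) (hg0 : ∀ ω, 0 ≤ g ω) (hg1 : ∀ ω, g ω ≤ 1)
    (haj : aj =ᵐ[μ] μ[Set.indicator {ω | p ω ≤ c} (fun _ => (1:ℝ)) | 𝒢]) :
    ∫ ω, (if p ω ≤ c ∧ aj ω ≤ c + δ then (1:ℝ) else 0) * g ω ∂μ
      ≤ κ * ∫ ω, (if ¬ p ω ≤ c then (1:ℝ) else 0) * g ω ∂μ := by
  have hgm : Measurable[m0] g := hgG.mono hm0 le_rfl
  set X : Ω → ℝ := Set.indicator {ω | p ω ≤ c} (fun _ => (1 : ℝ)) with hXdef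
  have hXval : ∀ ω, X ω = if p ω ≤ c then 1 else 0 := by
    intro ω
    simp only [hXdef, Set.indicator_apply, Set.mem_setOf_eq]
  have hXmeas : Measurable[m0] X := by
    simp only [hXdef]
    exact measurable_const.indicator (measurableSet_le hp measurable_const)
  have hXint : Integrable X μ := integrable_of_bounded_meas hXmeas 1
    (fun ω => by rw [hXval]; split_ifs <;> simp)
  set A : Ω → ℝ := μ[X | 𝒢] with hAdef
  have haeq : aj =ᵐ[μ] A := haj
  have hAsm : StronglyMeasurable[𝒢] A := stronglyMeasurable_condExp
  have hAmeas : Measurable[m0] A := hAsm.measurable.mono hm0 le_rfl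
  have hAint : Integrable A μ := integrable_condExp
  have hA0 : 0 ≤ᵐ[μ] A := condExp_nonneg
    (ae_of_all _ fun ω => by rw [hXval]; split_ifs <;> norm_num)
  set h : Ω → ℝ := fun ω => (if A ω ≤ c + δ then (1:ℝ) else 0) * g ω with hhdef
  have hhG : Measurable[𝒢] h := by
    simp only [hhdef]
    exact (Measurable.ite (measurableSet_le hAsm.measurable measurable_const)
      measurable_const measurable_const).mul hgG
  have hhGsm : StronglyMeasurable[𝒢] h := hhG.stronglyMeasurable
  have hhmeas : Measurable[m0] h := hhG.mono hm0 le_rfl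
  have hh0 : ∀ ω, 0 ≤ h ω := fun ω => by
    simp only [hhdef]
    exact mul_nonneg (by split_ifs <;> norm_num) (hg0 ω)
  have hh1 : ∀ ω, h ω ≤ 1 := fun ω => by
    simp only [hhdef]
    calc (if A ω ≤ c + δ then (1:ℝ) else 0) * g ω
        ≤ 1 * 1 := mul_le_mul (by split_ifs <;> norm_num) (hg1 ω) (hg0 ω) one_pos.le
      _ = 1 := one_mul 1
  have hhle : ∀ ω, h ω ≤ g ω := fun ω => by
    simp only [hhdef]
    split_ifs
    · rw [one_mul]
    · rw [zero_mul]; exact hg0 ω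
  have hhint : Integrable h μ := integrable_of_bounded_meas hhmeas 1
    (fun ω => abs_le.mpr ⟨by linarith [hh0 ω], hh1 ω⟩)
  have hhbd : ∀ᵐ ω ∂μ, ‖h ω‖ ≤ 1 := ae_of_all _ fun ω => by
    rw [Real.norm_eq_abs, abs_le]
    exact ⟨by linarith [hh0 ω], hh1 ω⟩
  have hintHX : Integrable (fun ω => h ω * X ω) μ := hXint.bdd_mul
    (hhmeas.aestronglyMeasurable (μ := μ)) (c := 1) (ae_of_all _ fun ω => by
      rw [Real.norm_eq_abs, abs_le]
      exact ⟨by linarith [hh0 ω], hh1 ω⟩)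
  have hintHA : Integrable (fun ω => h ω * A ω) μ := hAint.bdd_mul
    (hhmeas.aestronglyMeasurable (μ := μ)) (c := 1) (ae_of_all _ fun ω => by
      rw [Real.norm_eq_abs, abs_le]
      exact ⟨by linarith [hh0 ω], hh1 ω⟩)
  have hpull : μ[h * X | 𝒢] =ᵐ[μ] h * A :=
    condExp_stronglyMeasurable_mul_of_bound hm0 hhGsm hXint 1 hhbd
  have he1 : ∫ ω, (if p ω ≤ c ∧ aj ω ≤ c + δ then (1:ℝ) else 0) * g ω ∂μ
      = ∫ ω, h ω * X ω ∂μ := by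
    apply integral_congr_ae
    filter_upwards [haeq] with ω hω
    simp only [hhdef]
    rw [hXval, ← hω]
    by_cases h1 : p ω ≤ c <;> by_cases h2 : aj ω ≤ c + δ <;> simp [h1, h2]
  have he2 : ∫ ω, h ω * X ω ∂μ = ∫ ω, h ω * A ω ∂μ := by
    have e1 : ∫ ω, (h * X) ω ∂μ = ∫ ω, (μ[h * X | 𝒢]) ω ∂μ := (integral_condExp hm0).symm
    have e2 : ∫ ω, (μ[h * X | 𝒢]) ω ∂μ = ∫ ω, (h * A) ω ∂μ := integral_congr_ae hpull
    exact e1.trans e2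
  have hptw : ∀ᵐ ω ∂μ, h ω * A ω ≤ κ * (h ω - h ω * A ω) := by
    filter_upwards [hA0] with ω h0
    by_cases hle : A ω ≤ c + δ
    · have hhw := hh0 ω
      rw [hκ, div_mul_eq_mul_div, le_div_iff₀ h1cδ]
      nlinarith [mul_le_mul_of_nonneg_left hle hhw]
    · have hzero : h ω = 0 := by
        simp only [hhdef]
        simp [hle]
      rw [hzero]
      simp
  have hmono1 : ∫ ω, h ω * A ω ∂μ ≤ ∫ ω, κ * (h ω - h ω * A ω) ∂μ :=
    integral_mono_ae hintHA ((hhint.sub hintHA).const_mul κ) hptw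
  have hmono1' : ∫ ω, h ω * A ω ∂μ ≤ κ * (∫ ω, h ω ∂μ - ∫ ω, h ω * A ω ∂μ) := by
    rwa [integral_const_mul, integral_sub hhint hintHA] at hmono1
  have hNint : Integrable (fun ω => (if ¬ p ω ≤ c then (1:ℝ) else 0) * g ω) μ := by
    apply integrable_of_bounded_meas _ 1
    · intro ω
      have h1 := hg0 ω
      have h2 := hg1 ω
      rw [abs_le]
      constructor <;> split_ifs <;> simp <;> linarith
    · exact (Measurable.ite (measurableSet_le hp measurable_const).compl
        measurable_const measurable_const).mul hgm
  have hlast : ∫ ω, h ω - h ω * X ω ∂μ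
      ≤ ∫ ω, (if ¬ p ω ≤ c then (1:ℝ) else 0) * g ω ∂μ := by
    apply integral_mono (hhint.sub hintHX) hNint
    intro ω
    simp only [Pi.sub_apply]
    rw [hXval ω]
    by_cases h1 : p ω ≤ c
    · simp [h1]
    · simp only [h1, not_false_eq_true, if_true, if_false, mul_ite, mul_one, mul_zero,
        sub_zero, one_mul, ite_false]
      simpa using hhle ω
  calc ∫ ω, (if p ω ≤ c ∧ aj ω ≤ c + δ then (1:ℝ) else 0) * g ω ∂μ
      = ∫ ω, h ω * A ω ∂μ := he1.trans he2
    _ ≤ κ * (∫ ω, h ω ∂μ - ∫ ω, h ω * A ω ∂μ) := hmono1'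
    _ = κ * (∫ ω, h ω ∂μ - ∫ ω, h ω * X ω ∂μ) := by rw [he2]
    _ = κ * ∫ ω, h ω - h ω * X ω ∂μ := by rw [integral_sub hhint hintHX]
    _ ≤ κ * ∫ ω, (if ¬ p ω ≤ c then (1:ℝ) else 0) * g ω ∂μ :=
        mul_le_mul_of_nonneg_left hlast hκ0

/-- Core estimate of Theorem 2.1: if `a_j = P(p_j ≤ c | 1{p_{-j} ≤ c})` satisfies
`P(max_{j ∈ H₀} a_j ≤ c + δ) ≥ 1 - ε` with `c + δ < 1`, then the ratio
`R_δ = #{j ≤ k̂, j ∈ H₀ : p_j ≤ c, a_j ≤ c+δ} / (1 + #{j ≤ k̂, j ∈ H₀ : p_j > c})`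
satisfies `E[R_δ] ≤ (c+δ)/(1-c-δ)`. -/
theorem seqstep_Rdelta_expectation_bound
    {Ω : Type*} [MeasurableSpace Ω] (μ : Measure Ω) [IsProbabilityMeasure μ]
    (m : ℕ) (c q δ ε : ℝ)
    (hc : 0 < c) (hc1 : c < 1) (hq : 0 < q) (hq1 : q < 1)
    (hδ : 0 ≤ δ) (hε : 0 ≤ ε) (hcδ : c + δ < 1)
    (pv : ℕ → Ω → ℝ) (hmeas : ∀ j, Measurable (pv j))
    (H0 : Finset ℕ) (hH0 : H0 ⊆ Finset.Icc 1 m)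
    (a : ℕ → Ω → ℝ) (hameas : ∀ j, Measurable (a j))
    -- `a j` is the conditional probability of `{p_j ≤ c}` given the indicator vector
    -- `1{p_i ≤ c}, i ≠ j`:
    (ha : ∀ j ∈ H0, a j =ᵐ[μ]
      μ[Set.indicator {ω | pv j ω ≤ c} (fun _ => (1 : ℝ)) |
        MeasurableSpace.comap
          (fun ω => fun i : {i // i ∈ Finset.Icc 1 m ∧ i ≠ j} =>
            if pv i.1 ω ≤ c then (1 : ℝ) else 0)
          inferInstance])
    (hamax : ENNReal.ofReal (1 - ε) ≤ μ {ω | ∀ j ∈ H0, a j ω ≤ c + δ})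
    (khat : Ω → ℕ) (hkmeas : Measurable khat)
    -- `khat` is the Selective SeqStep+ threshold (pathwise), 0 if no valid k exists:
    (hkhat : ∀ ω, khat ω ≤ m ∧
      (khat ω = 0 ∨
        (1 + (((Finset.Icc 1 (khat ω)).filter (fun j => c < pv j ω)).card : ℝ)) /
            max (((Finset.Icc 1 (khat ω)).filter (fun j => pv j ω ≤ c)).card : ℝ) 1 ≤
          (1 - c) / c * q) ∧
      ∀ k, 1 ≤ k → k ≤ m →
        (1 + (((Finset.Icc 1 k).filter (fun j => c < pv j ω)).card : ℝ)) /
            max (((Finset.Icc 1 k).filter (fun j => pv j ω ≤ c)).card : ℝ) 1 ≤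
          (1 - c) / c * q → k ≤ khat ω) :
    ∫ ω, (((H0.filter
          (fun j => j ≤ khat ω ∧ pv j ω ≤ c ∧ a j ω ≤ c + δ)).card : ℝ) /
        (1 + ((H0.filter (fun j => j ≤ khat ω ∧ c < pv j ω)).card : ℝ))) ∂μ ≤
      (c + δ) / (1 - c - δ) := by
  classical
  set t : ℝ := (1 - c) / c * q with ht
  have h1cδ : 0 < 1 - c - δ := by linarith
  set κ : ℝ := (c + δ) / (1 - c - δ) with hκ
  have hκ0 : 0 ≤ κ := div_nonneg (by linarith) h1cδ.le
  set b : Ω → ℕ → Bool := fun ω i => decide (pv i ω ≤ c) with hb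
  -- identification of khat with sssK
  have hkey : ∀ ω, khat ω = sssK t m (b ω) := by
    intro ω
    obtain ⟨hm', hval, hmax⟩ := hkhat ω
    have hratio : ∀ k, (1 + (((Finset.Icc 1 k).filter (fun j => c < pv j ω)).card : ℝ)) /
        max (((Finset.Icc 1 k).filter (fun j => pv j ω ≤ c)).card : ℝ) 1 = sssRatio (b ω) k := by
      intro k
      unfold sssRatio
      have e1 : (Finset.Icc 1 k).filter (fun j => c < pv j ω)
          = (Finset.Icc 1 k).filter (fun i => b ω i = false) :=
        Finset.filter_congr (fun i _ => by simp [hb, not_le])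
      have e2 : (Finset.Icc 1 k).filter (fun j => pv j ω ≤ c)
          = (Finset.Icc 1 k).filter (fun i => b ω i = true) :=
        Finset.filter_congr (fun i _ => by simp [hb])
      rw [e1, e2]
    apply le_antisymm
    · rcases hval with h0 | hval
      · rw [h0]; exact Nat.zero_le _
      · by_cases h0 : khat ω = 0
        · rw [h0]; exact Nat.zero_le _
        · exact le_sssK (Nat.one_le_iff_ne_zero.mpr h0) hm' (by rw [← hratio]; exact hval)
    · rcases sssK_spec t m (b ω) with h0 | ⟨h1, h2, h3⟩
      · rw [h0]; exact Nat.zero_le _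
      · exact hmax _ h1 h2 (by rw [hratio]; exact h3)
  -- measurability of the leave-one-out functional
  have hφmeas : ∀ j : ℕ, Measurable
      (fun ω => fun i : {i // i ∈ Finset.Icc 1 m ∧ i ≠ j} =>
        if pv i.1 ω ≤ c then (1:ℝ) else 0) := by
    intro j
    apply measurable_pi_lambda
    intro i
    exact Measurable.ite (measurableSet_le (hmeas i.1) measurable_const)
      measurable_const measurable_const
  have h𝒢le : ∀ j : ℕ, MeasurableSpace.comap
      (fun ω => fun i : {i // i ∈ Finset.Icc 1 m ∧ i ≠ j} =>
        if pv i.1 ω ≤ c then (1:ℝ) else 0) inferInstance ≤ ‹MeasurableSpace Ω› :=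
    fun j => measurable_iff_comap_le.mp (hφmeas j)
  have hgG : ∀ j : ℕ, Measurable[MeasurableSpace.comap
      (fun ω => fun i : {i // i ∈ Finset.Icc 1 m ∧ i ≠ j} =>
        if pv i.1 ω ≤ c then (1:ℝ) else 0) inferInstance]
      (fun ω => sssG t m H0 j (b ω)) := by
    intro j
    set ι := {i // i ∈ Finset.Icc 1 m ∧ i ≠ j} with hι
    haveI : Finite ι :=
      Finite.of_injective (fun i : ι => (⟨i.1, i.2.1⟩ : {x // x ∈ Finset.Icc 1 m}))
        fun x y hxy => Subtype.ext (by simpa using congrArg Subtype.val hxy)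
    haveI : MeasurableSingletonClass (ι → Bool) := by
      constructor
      intro f
      have hset : ({f} : Set (ι → Bool)) = ⋂ i, (fun g : ι → Bool => g i) ⁻¹' {f i} := by
        ext g
        simp [funext_iff, Set.mem_iInter, eq_comm]
      rw [hset]
      exact MeasurableSet.iInter fun i => (measurable_pi_apply i) (measurableSet_singleton _)
    set E : (ι → ℝ) → (ι → Bool) := fun v i => decide (v i = 1) with hE
    set G : (ι → Bool) → ℝ := fun w =>
      sssG t m H0 j (fun i => if h : i ∈ Finset.Icc 1 m ∧ i ≠ j then w ⟨i, h⟩ else true) with hG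
    have hEmeas : Measurable E := by
      apply measurable_pi_lambda
      intro i
      have : (fun v : ι → ℝ => decide (v i = 1))
          = (fun x : ℝ => decide (x = 1)) ∘ (fun v : ι → ℝ => v i) := rfl
      rw [hE]
      have hdec : Measurable (fun x : ℝ => decide (x = 1)) := by
        have : (fun x : ℝ => decide (x = 1)) = fun x => if x = 1 then true else false := by
          funext x
          by_cases hx : x = 1 <;> simp [hx]
        rw [this]
        exact Measurable.ite (measurableSet_eq) measurable_const measurable_const
      exact hdec.comp (measurable_pi_apply i)
    have hGmeas : Measurable G := measurable_of_countable G
    have hgeq : (fun ω => sssG t m H0 j (b ω))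
        = (G ∘ E) ∘ (fun ω => fun i : ι => if pv i.1 ω ≤ c then (1:ℝ) else 0) := by
      funext ω
      show sssG t m H0 j (b ω) = G (E (fun i : ι => if pv i.1 ω ≤ c then (1:ℝ) else 0))
      rw [hG]
      apply sssG_congr hH0 j
      intro i hi hij
      rw [hE]
      simp only []
      rw [dif_pos ⟨hi, hij⟩]
      by_cases hpc : pv i ω ≤ c <;> simp [hb, hpc]
    rw [hgeq]
    exact (hGmeas.comp hEmeas).comp (measurable_iff_comap_le.mpr le_rfl)
  have hgm : ∀ j : ℕ, Measurable (fun ω => sssG t m H0 j (b ω)) :=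
    fun j => (hgG j).mono (h𝒢le j) le_rfl
  -- pointwise decomposition of the ratio
  have hpoint : ∀ ω, (((H0.filter
          (fun j => j ≤ khat ω ∧ pv j ω ≤ c ∧ a j ω ≤ c + δ)).card : ℝ) /
        (1 + ((H0.filter (fun j => j ≤ khat ω ∧ c < pv j ω)).card : ℝ)))
      = ∑ j ∈ H0, (if pv j ω ≤ c ∧ a j ω ≤ c + δ then (1:ℝ) else 0) * sssG t m H0 j (b ω) := by
    intro ω
    have hnum : (((H0.filter (fun j => j ≤ khat ω ∧ pv j ω ≤ c ∧ a j ω ≤ c + δ)).card : ℝ))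
        = ∑ j ∈ H0, (if j ≤ khat ω ∧ pv j ω ≤ c ∧ a j ω ≤ c + δ then (1:ℝ) else 0) := by
      rw [Finset.card_filter]
      push_cast
      rfl
    rw [hnum, Finset.sum_div]
    apply Finset.sum_congr rfl
    intro j _
    by_cases hpj : pv j ω ≤ c
    · have hbj : b ω j = true := by simp [hb, hpj]
      have hupd : Function.update (b ω) j true = b ω := by
        conv_lhs => rw [← hbj]
        exact Function.update_eq_self j (b ω)
      have hK : sssK t m (Function.update (b ω) j true) = khat ω := by
        rw [hupd, ← hkey ω]
      have efilter : H0.filter (fun i => i ≤ khat ω ∧ c < pv i ω)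
          = H0.filter (fun i => i ≠ j ∧ i ≤ khat ω ∧ b ω i = false) := by
        refine Finset.filter_congr fun i _ => ?_
        simp only [hb, decide_eq_false_iff_not, not_le]
        constructor
        · rintro ⟨h1, h2⟩
          refine ⟨fun he => absurd hpj ?_, h1, h2⟩
          rw [he] at h2
          exact not_le.mpr h2
        · rintro ⟨_, h1, h2⟩
          exact ⟨h1, h2⟩
      unfold sssG
      rw [hK, ← efilter]
      by_cases h1 : j ≤ khat ω <;> by_cases h2 : a j ω ≤ c + δ <;>
        simp [hpj, h1, h2, mul_div_assoc]
    · simp [hpj]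
  -- integrability
  have hIg_int : ∀ j : ℕ, Integrable
      (fun ω => (if pv j ω ≤ c ∧ a j ω ≤ c + δ then (1:ℝ) else 0) * sssG t m H0 j (b ω)) μ := by
    intro j
    apply integrable_of_bounded_meas _ 1
    · intro ω
      have h1 := sssG_nonneg t m H0 j (b ω)
      have h2 := sssG_le_one t m H0 j (b ω)
      rw [abs_le]
      constructor <;> split_ifs <;> simp <;> linarith
    · exact (Measurable.ite ((measurableSet_le (hmeas j) measurable_const).inter
        (measurableSet_le (hameas j) measurable_const)) measurable_const measurable_const).mul
        (hgm j)
  have hNg_int : ∀ j : ℕ, Integrable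
      (fun ω => (if b ω j = false then (1:ℝ) else 0) * sssG t m H0 j (b ω)) μ := by
    intro j
    apply integrable_of_bounded_meas _ 1
    · intro ω
      have h1 := sssG_nonneg t m H0 j (b ω)
      have h2 := sssG_le_one t m H0 j (b ω)
      rw [abs_le]
      constructor <;> split_ifs <;> simp <;> linarith
    · have hbmeas : Measurable (fun ω => (if b ω j = false then (1:ℝ) else 0)) := by
        have : (fun ω => (if b ω j = false then (1:ℝ) else 0))
            = fun ω => if pv j ω ≤ c then 0 else 1 := by
          funext ω
          by_cases hpc : pv j ω ≤ c <;> simp [hb, hpc]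
        rw [this]
        exact Measurable.ite (measurableSet_le (hmeas j) measurable_const)
          measurable_const measurable_const
      exact hbmeas.mul (hgm j)
  -- the per-index conditional-probability estimate
  have hstep : ∀ j ∈ H0,
      ∫ ω, (if pv j ω ≤ c ∧ a j ω ≤ c + δ then (1:ℝ) else 0) * sssG t m H0 j (b ω) ∂μ
      ≤ κ * ∫ ω, (if b ω j = false then (1:ℝ) else 0) * sssG t m H0 j (b ω) ∂μ := by
    intro j hj
    have hconv : (fun ω => (if b ω j = false then (1:ℝ) else 0) * sssG t m H0 j (b ω))
        = (fun ω => (if ¬ pv j ω ≤ c then (1:ℝ) else 0) * sssG t m H0 j (b ω)) := by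
      funext ω
      by_cases hpc : pv j ω ≤ c <;> simp [hb, hpc]
    rw [hconv]
    exact cond_step μ (h𝒢le j) c δ κ h1cδ hκ (by linarith) (hmeas j) (a j)
      (fun ω => sssG t m H0 j (b ω)) (hgG j) (fun ω => sssG_nonneg t m H0 j (b ω))
      (fun ω => sssG_le_one t m H0 j (b ω)) (ha j hj)
  -- assembly
  calc ∫ ω, (((H0.filter
          (fun j => j ≤ khat ω ∧ pv j ω ≤ c ∧ a j ω ≤ c + δ)).card : ℝ) /
        (1 + ((H0.filter (fun j => j ≤ khat ω ∧ c < pv j ω)).card : ℝ))) ∂μ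
      = ∫ ω, ∑ j ∈ H0, (if pv j ω ≤ c ∧ a j ω ≤ c + δ then (1:ℝ) else 0)
          * sssG t m H0 j (b ω) ∂μ := integral_congr_ae (ae_of_all _ hpoint)
    _ = ∑ j ∈ H0, ∫ ω, (if pv j ω ≤ c ∧ a j ω ≤ c + δ then (1:ℝ) else 0)
          * sssG t m H0 j (b ω) ∂μ := integral_finset_sum H0 (fun j _ => hIg_int j)
    _ ≤ ∑ j ∈ H0, κ * ∫ ω, (if b ω j = false then (1:ℝ) else 0)
          * sssG t m H0 j (b ω) ∂μ := Finset.sum_le_sum hstep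
    _ = κ * ∑ j ∈ H0, ∫ ω, (if b ω j = false then (1:ℝ) else 0)
          * sssG t m H0 j (b ω) ∂μ := (Finset.mul_sum _ _ _).symm
    _ = κ * ∫ ω, ∑ j ∈ H0, (if b ω j = false then (1:ℝ) else 0)
          * sssG t m H0 j (b ω) ∂μ := by
        rw [integral_finset_sum H0 (fun j _ => hNg_int j)]
    _ ≤ κ * 1 := by
        apply mul_le_mul_of_nonneg_left _ hκ0
        calc ∫ ω, ∑ j ∈ H0, (if b ω j = false then (1:ℝ) else 0)
              * sssG t m H0 j (b ω) ∂μ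
            ≤ ∫ _ω, (1:ℝ) ∂μ := by
              apply integral_mono (integrable_finset_sum H0 (fun j _ => hNg_int j))
                (integrable_const 1)
              intro ω
              exact sss_sum_le_one t m H0 hH0 (b ω)
          _ = 1 := by simp
    _ = (c + δ) / (1 - c - δ) := by rw [mul_one, hκ]
end

section
/- Suppose the ordering of p-values is fixed, $c \in (0,1)$, and setting $a_j = \mathbb{P}(p_j \leq c \mid \mathbf{1}\{p_{-j} \leq c\})$, the p-values satisfy $\mathbb{P}(\max_{j \in \mathcal{H}_0} a_j \leq c + \delta) \geq 1 - \epsilon$ for some $\delta \geq 0$, $\epsilon \geq 0$ with $c + \delta < 1$. Then Selective SeqStep+ at level $q$ satisfies $\mathrm{FDR} \leq q \cdot \frac{c + \delta}{c} \cdot \frac{1 - c}{1 - c - \delta} + \epsilon$. -/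
open MeasureTheory ProbabilityTheory
open scoped Classical

namespace SeqStepAux

/-- Largest `k ∈ [1, m]` satisfying `P`, or `0` if none. -/
noncomputable def maxSat (P : ℕ → Prop) (m : ℕ) : ℕ :=
  if h : ((Finset.Icc 1 m).filter P).Nonempty then ((Finset.Icc 1 m).filter P).max' h else 0

lemma maxSat_le (P : ℕ → Prop) (m : ℕ) : maxSat P m ≤ m := by
  unfold maxSat
  split
  · next h =>
      have := Finset.max'_mem _ h
      simp only [Finset.mem_filter, Finset.mem_Icc] at this
      exact this.1.2
  · exact Nat.zero_le m

lemma maxSat_spec {P : ℕ → Prop} {m : ℕ} (h : 1 ≤ maxSat P m) : P (maxSat P m) := by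
  unfold maxSat at *
  split at h
  · next hne =>
      have := Finset.max'_mem _ hne
      simp only [Finset.mem_filter] at this
      simpa [maxSat, dif_pos hne] using this.2
  · omega

lemma le_maxSat {P : ℕ → Prop} {m k : ℕ} (h1 : 1 ≤ k) (h2 : k ≤ m) (h : P k) :
    k ≤ maxSat P m := by
  have hk : k ∈ (Finset.Icc 1 m).filter P := by
    simp [Finset.mem_filter, Finset.mem_Icc, h1, h2, h]
  unfold maxSat
  rw [dif_pos ⟨k, hk⟩]
  exact Finset.le_max' _ k hk

/-- number of `true` signs in `[1,k]` -/
noncomputable def apC (s : ℕ → Bool) (k : ℕ) : ℕ :=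
  ((Finset.Icc 1 k).filter (fun i => s i = true)).card

/-- number of `false` signs in `[1,k]` -/
noncomputable def amC (s : ℕ → Bool) (k : ℕ) : ℕ :=
  ((Finset.Icc 1 k).filter (fun i => s i = false)).card

/-- the SeqStep+ stopping condition at `k` -/
def condC (τ : ℝ) (s : ℕ → Bool) (k : ℕ) : Prop :=
  (1 + (amC s k : ℝ)) / max (apC s k : ℝ) 1 ≤ τ

/-- the condition at `k` after one `false` sign at a position `≤ k` is flipped to `true` -/
def cond1C (τ : ℝ) (s : ℕ → Bool) (k : ℕ) : Prop :=
  (amC s k : ℝ) / max ((apC s k : ℝ) + 1) 1 ≤ τ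

noncomputable def KfC (τ : ℝ) (m : ℕ) (s : ℕ → Bool) : ℕ := maxSat (condC τ s) m

def flipC (j : ℕ) (s : ℕ → Bool) : ℕ → Bool := fun i => if i = j then true else s i

noncomputable def vxC (H0 : Finset ℕ) (j k : ℕ) (s : ℕ → Bool) : ℕ :=
  (H0.filter (fun i => i ≤ k ∧ i ≠ j ∧ s i = false)).card

noncomputable def gphiC (τ : ℝ) (m : ℕ) (H0 : Finset ℕ) (j : ℕ) (s : ℕ → Bool) : ℝ :=
  if j ≤ KfC τ m (flipC j s) then
    (1 + (vxC H0 j (KfC τ m (flipC j s)) (flipC j s) : ℝ))⁻¹ else 0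

lemma gphiC_nonneg (τ : ℝ) (m : ℕ) (H0 : Finset ℕ) (j : ℕ) (s : ℕ → Bool) :
    0 ≤ gphiC τ m H0 j s := by
  unfold gphiC
  split
  · positivity
  · exact le_rfl

lemma apC_flip {j k : ℕ} {s : ℕ → Bool} (hj1 : 1 ≤ j) (hjk : j ≤ k) (hs : s j = false) :
    apC (flipC j s) k = apC s k + 1 := by
  unfold apC
  have : (Finset.Icc 1 k).filter (fun i => flipC j s i = true) =
      insert j ((Finset.Icc 1 k).filter (fun i => s i = true)) := by
    ext i
    simp only [Finset.mem_filter, Finset.mem_insert, Finset.mem_Icc]; simp only [flipC]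
    constructor
    · rintro ⟨⟨h1, h2⟩, h3⟩
      by_cases hij : i = j
      · exact Or.inl hij
      · right; rw [if_neg hij] at h3; exact ⟨⟨h1, h2⟩, h3⟩
    · rintro (rfl | ⟨⟨h1, h2⟩, h3⟩)
      · exact ⟨⟨hj1, hjk⟩, by simp⟩
      · refine ⟨⟨h1, h2⟩, ?_⟩
        by_cases hij : i = j
        · subst hij; simp
        · rw [if_neg hij]; exact h3
  rw [this, Finset.card_insert_of_notMem]
  simp [hs]

lemma amC_flip {j k : ℕ} {s : ℕ → Bool} (hj1 : 1 ≤ j) (hjk : j ≤ k) (hs : s j = false) :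
    amC s k = amC (flipC j s) k + 1 := by
  unfold amC
  have : (Finset.Icc 1 k).filter (fun i => s i = false) =
      insert j ((Finset.Icc 1 k).filter (fun i => flipC j s i = false)) := by
    ext i
    simp only [Finset.mem_filter, Finset.mem_insert, Finset.mem_Icc]; simp only [flipC]
    constructor
    · rintro ⟨⟨h1, h2⟩, h3⟩
      by_cases hij : i = j
      · exact Or.inl hij
      · right; exact ⟨⟨h1, h2⟩, by rw [if_neg hij]; exact h3⟩
    · rintro (rfl | ⟨⟨h1, h2⟩, h3⟩)
      · exact ⟨⟨hj1, hjk⟩, hs⟩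
      · refine ⟨⟨h1, h2⟩, ?_⟩
        by_cases hij : i = j
        · subst hij; simp at h3
        · rw [if_neg hij] at h3; exact h3
  rw [this, Finset.card_insert_of_notMem]
  simp [flipC]

lemma condC_flip_iff {τ : ℝ} {j k : ℕ} {s : ℕ → Bool} (hj1 : 1 ≤ j) (hjk : j ≤ k)
    (hs : s j = false) : condC τ (flipC j s) k ↔ cond1C τ s k := by
  unfold condC cond1C
  rw [apC_flip hj1 hjk hs, amC_flip hj1 hjk hs]
  push_cast
  rw [add_comm (1 : ℝ)]

lemma gphiC_eq {τ : ℝ} {m : ℕ} {H0 : Finset ℕ} {j : ℕ} {s : ℕ → Bool}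
    (hg : j ≤ KfC τ m (flipC j s)) :
    gphiC τ m H0 j s = (1 + (vxC H0 j (KfC τ m (flipC j s)) (flipC j s) : ℝ))⁻¹ := by
  unfold gphiC; rw [if_pos hg]

lemma gphiC_eq_zero {τ : ℝ} {m : ℕ} {H0 : Finset ℕ} {j : ℕ} {s : ℕ → Bool}
    (hg : ¬ j ≤ KfC τ m (flipC j s)) : gphiC τ m H0 j s = 0 := by
  unfold gphiC; rw [if_neg hg]

/-- The ghost lemma: the total contribution of positions carrying a `false` sign,
each evaluated in the world where its own sign is flipped to `true`, is at most 1. -/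
lemma ghost_sum_le_one (τ : ℝ) (m : ℕ) (H0 : Finset ℕ) (hH0 : H0 ⊆ Finset.Icc 1 m)
    (s : ℕ → Bool) (b : ℕ → ℝ) (hb0 : ∀ j, 0 ≤ b j) (hb1 : ∀ j, b j ≤ 1) :
    ∑ j ∈ H0.filter (fun j => s j = false), b j * gphiC τ m H0 j s ≤ 1 := by
  set Kst := maxSat (cond1C τ s) m with hKstdef
  set Z := H0.filter (fun i => i ≤ Kst ∧ s i = false) with hZ
  have key : ∀ j ∈ H0.filter (fun j => s j = false),
      b j * gphiC τ m H0 j s ≤ if j ∈ Z then ((Z.card : ℝ))⁻¹ else 0 := by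
    intro j hj
    simp only [Finset.mem_filter] at hj
    obtain ⟨hjH0, hjs⟩ := hj
    have hj1 : 1 ≤ j := (Finset.mem_Icc.mp (hH0 hjH0)).1
    have hjm : j ≤ m := (Finset.mem_Icc.mp (hH0 hjH0)).2
    by_cases hg : j ≤ KfC τ m (flipC j s)
    · -- ghost term
      have hKj1 : 1 ≤ KfC τ m (flipC j s) := le_trans hj1 hg
      have hKjm : KfC τ m (flipC j s) ≤ m := maxSat_le _ _
      have hcond : condC τ (flipC j s) (KfC τ m (flipC j s)) := maxSat_spec hKj1
      have hcond1 : cond1C τ s (KfC τ m (flipC j s)) :=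
        (condC_flip_iff hj1 hg hjs).mp hcond
      have hKstKj : KfC τ m (flipC j s) ≤ Kst := le_maxSat hKj1 hKjm hcond1
      have hjKst : j ≤ Kst := le_trans hg hKstKj
      have hjZ : j ∈ Z := by
        rw [hZ, Finset.mem_filter]; exact ⟨hjH0, hjKst, hjs⟩
      have hKst1 : 1 ≤ Kst := le_trans hj1 hjKst
      have hcond1' : cond1C τ s Kst := maxSat_spec hKst1
      have hcondKst : condC τ (flipC j s) Kst := (condC_flip_iff hj1 hjKst hjs).mpr hcond1'
      have hKstm : Kst ≤ m := maxSat_le _ _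
      have hKjKst : Kst ≤ KfC τ m (flipC j s) := le_maxSat hKst1 hKstm hcondKst
      have hsub : Z.erase j ⊆
          H0.filter (fun i => i ≤ KfC τ m (flipC j s) ∧ i ≠ j ∧ flipC j s i = false) := by
        intro i hi
        rw [Finset.mem_erase] at hi
        obtain ⟨hij, hiZ⟩ := hi
        rw [hZ, Finset.mem_filter] at hiZ
        obtain ⟨hiH0, hiKst, his⟩ := hiZ
        rw [Finset.mem_filter]
        refine ⟨hiH0, le_trans hiKst hKjKst, hij, ?_⟩
        unfold flipC
        rw [if_neg hij]; exact his
      have hcard : (Z.card : ℝ) ≤ 1 + (vxC H0 j (KfC τ m (flipC j s)) (flipC j s) : ℝ) := by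
        have h1 : Z.card ≤ 1 + (Z.erase j).card := by
          rw [Finset.card_erase_of_mem hjZ]; omega
        have h2 : (Z.erase j).card ≤ vxC H0 j (KfC τ m (flipC j s)) (flipC j s) :=
          Finset.card_le_card hsub
        have := le_trans h1 (by omega : 1 + (Z.erase j).card ≤
          1 + vxC H0 j (KfC τ m (flipC j s)) (flipC j s))
        exact_mod_cast this
      have hZpos : 0 < (Z.card : ℝ) := by
        have : 0 < Z.card := Finset.card_pos.mpr ⟨j, hjZ⟩
        exact_mod_cast this
      have hgphi : gphiC τ m H0 j s ≤ (Z.card : ℝ)⁻¹ := by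
        rw [gphiC_eq hg]
        exact inv_anti₀ hZpos hcard
      rw [if_pos hjZ]
      calc b j * gphiC τ m H0 j s ≤ 1 * gphiC τ m H0 j s :=
            mul_le_mul_of_nonneg_right (hb1 j) (gphiC_nonneg _ _ _ _ _)
        _ = gphiC τ m H0 j s := one_mul _
        _ ≤ (Z.card : ℝ)⁻¹ := hgphi
    · rw [gphiC_eq_zero hg, mul_zero]
      split
      · positivity
      · exact le_rfl
  have hZsub : Z ⊆ H0.filter (fun j => s j = false) := by
    intro i hi
    rw [hZ, Finset.mem_filter] at hi
    rw [Finset.mem_filter]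
    exact ⟨hi.1, hi.2.2⟩
  calc ∑ j ∈ H0.filter (fun j => s j = false), b j * gphiC τ m H0 j s
      ≤ ∑ j ∈ H0.filter (fun j => s j = false), (if j ∈ Z then ((Z.card : ℝ))⁻¹ else 0) :=
        Finset.sum_le_sum key
    _ = ∑ j ∈ (H0.filter (fun j => s j = false)) ∩ Z, ((Z.card : ℝ))⁻¹ :=
        Finset.sum_ite_mem _ _ _
    _ = (Z.card : ℝ) * (Z.card : ℝ)⁻¹ := by
        rw [Finset.inter_eq_right.mpr hZsub, Finset.sum_const, nsmul_eq_mul]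
    _ ≤ 1 := by
        rcases eq_or_ne ((Z.card : ℝ)) 0 with h | h
        · rw [h, zero_mul]; norm_num
        · rw [mul_inv_cancel₀ h]


lemma integrable_of_bounded {Ω : Type*} {mΩ : MeasurableSpace Ω} {μ : Measure Ω}
    [IsFiniteMeasure μ] {f : Ω → ℝ} (C : ℝ) (hf : Measurable f) (hC : ∀ ω, |f ω| ≤ C) :
    Integrable f μ :=
  (integrable_const C).mono' hf.aestronglyMeasurable
    (Filter.Eventually.of_forall fun ω => by simpa [Real.norm_eq_abs] using hC ω)

/-- The leave-one-out conditional-expectation bound. -/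
lemma key_condexp_bound {Ω : Type*} [inst : MeasurableSpace Ω] (μ : Measure Ω)
    [IsProbabilityMeasure μ] {𝔪 : MeasurableSpace Ω} (hle : 𝔪 ≤ inst)
    {r : ℝ} (hr : 0 ≤ r) {A : Set Ω} (hA : MeasurableSet[inst] A)
    {g : Ω → ℝ} (hg : Measurable[𝔪] g) (hg0 : ∀ ω, 0 ≤ g ω) (hg1 : ∀ ω, g ω ≤ 1) :
    ∫ ω, (Set.indicator A (fun _ => (1:ℝ)) ω) *
        ((if (μ[Set.indicator A (fun _ => (1:ℝ)) | 𝔪]) ω ≤ r then (1:ℝ) else 0) * g ω) ∂μ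
      ≤ r * ∫ ω,
          (if (μ[Set.indicator A (fun _ => (1:ℝ)) | 𝔪]) ω ≤ r then (1:ℝ) else 0) * g ω ∂μ := by
  set S : Ω → ℝ := Set.indicator A (fun _ => (1:ℝ)) with hSdef
  set cx : Ω → ℝ := μ[S | 𝔪] with hcx
  set b : Ω → ℝ := fun ω => if cx ω ≤ r then (1:ℝ) else 0 with hb
  set G : Ω → ℝ := fun ω => b ω * g ω with hG
  have hbm : Measurable[𝔪] b := by
    refine Measurable.ite ?_ measurable_const measurable_const
    exact measurableSet_le stronglyMeasurable_condExp.measurable measurable_const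
  have hb0 : ∀ ω, 0 ≤ b ω := fun ω => by rw [hb]; dsimp only; split <;> norm_num
  have hb1 : ∀ ω, b ω ≤ 1 := fun ω => by rw [hb]; dsimp only; split <;> norm_num
  have hGm : Measurable[𝔪] G := hbm.mul hg
  have hGm0 : Measurable[inst] G := hGm.mono hle le_rfl
  have hGabs : ∀ ω, |G ω| ≤ 1 := by
    intro ω
    rw [abs_of_nonneg (mul_nonneg (hb0 ω) (hg0 ω))]
    calc b ω * g ω ≤ 1 * 1 :=
          mul_le_mul (hb1 ω) (hg1 ω) (hg0 ω) zero_le_one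
      _ = 1 := one_mul 1
  have hSm : Measurable[inst] S := measurable_const.indicator hA
  have hSabs : ∀ ω, |S ω| ≤ 1 := by
    intro ω
    rw [hSdef]
    by_cases h : ω ∈ A <;> simp [Set.indicator_apply, h]
  have hSint : Integrable S μ := integrable_of_bounded (μ := μ) 1 hSm hSabs
  have hGSm : Measurable[inst] (G * S) := hGm0.mul hSm
  have hGSint : Integrable (G * S) μ :=
    integrable_of_bounded (μ := μ) 1 hGSm (fun ω => by
      rw [Pi.mul_apply, abs_mul]
      calc |G ω| * |S ω| ≤ 1 * 1 :=
            mul_le_mul (hGabs ω) (hSabs ω) (abs_nonneg _) zero_le_one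
        _ = 1 := one_mul 1)
  haveI : IsFiniteMeasure (μ.trim hle) := isFiniteMeasure_trim hle
  have heq1 : (fun ω => S ω * (b ω * g ω)) = G * S := by
    funext ω; rw [Pi.mul_apply, hG]; ring
  have hpull : μ[G * S | 𝔪] =ᵐ[μ] G * cx :=
    condExp_mul_of_stronglyMeasurable_left hGm.stronglyMeasurable hGSint hSint
  have hGcx_int : Integrable (G * cx) μ := by
    have := Integrable.bdd_mul (integrable_condExp (f := S) (m := 𝔪) (μ := μ))
      hGm0.aestronglyMeasurable (Filter.Eventually.of_forall fun ω => by simpa [Real.norm_eq_abs] using hGabs ω)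
    exact this
  have hGint : Integrable G μ := integrable_of_bounded (μ := μ) 1 hGm0 hGabs
  calc ∫ ω, S ω * (b ω * g ω) ∂μ = ∫ ω, (G * S) ω ∂μ := by rw [heq1]
    _ = ∫ ω, (μ[G * S | 𝔪]) ω ∂μ := (integral_condExp hle).symm
    _ = ∫ ω, (G * cx) ω ∂μ := integral_congr_ae hpull
    _ ≤ ∫ ω, r * G ω ∂μ := by
        refine integral_mono hGcx_int (hGint.const_mul r) ?_
        intro ω
        show (G * cx) ω ≤ r * G ω
        rw [Pi.mul_apply]
        by_cases h : cx ω ≤ r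
        · have hbω : b ω = 1 := by rw [hb]; exact if_pos h
          have hgnn : 0 ≤ G ω := mul_nonneg (hb0 ω) (hg0 ω)
          calc G ω * cx ω ≤ G ω * r :=
                mul_le_mul_of_nonneg_left h hgnn
            _ = r * G ω := mul_comm _ _
        · have hbω : b ω = 0 := by rw [hb]; exact if_neg h
          have : G ω = 0 := by rw [hG]; dsimp only; rw [hbω, zero_mul]
          rw [this, zero_mul, mul_zero]
    _ = r * ∫ ω, G ω ∂μ := integral_const_mul r G

lemma gphiC_le_one (τ : ℝ) (m : ℕ) (H0 : Finset ℕ) (j : ℕ) (s : ℕ → Bool) :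
    gphiC τ m H0 j s ≤ 1 := by
  unfold gphiC
  split
  · exact inv_le_one_of_one_le₀ (le_add_of_nonneg_right (Nat.cast_nonneg _))
  · norm_num

lemma flipC_eq_self {j : ℕ} {s : ℕ → Bool} (h : s j = true) : flipC j s = s := by
  funext i
  unfold flipC
  by_cases hij : i = j
  · subst hij; rw [if_pos rfl, h]
  · rw [if_neg hij]


lemma apC_congr {s s' : ℕ → Bool} {k : ℕ} (h : ∀ i ∈ Finset.Icc 1 k, s i = s' i) :
    apC s k = apC s' k := by
  unfold apC
  congr 1
  ext i
  simp only [Finset.mem_filter]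
  exact and_congr_right (fun hi => by rw [h i hi])

lemma amC_congr {s s' : ℕ → Bool} {k : ℕ} (h : ∀ i ∈ Finset.Icc 1 k, s i = s' i) :
    amC s k = amC s' k := by
  unfold amC
  congr 1
  ext i
  simp only [Finset.mem_filter]
  exact and_congr_right (fun hi => by rw [h i hi])

lemma maxSat_congr {P Q : ℕ → Prop} {m : ℕ} (h : ∀ k, 1 ≤ k → k ≤ m → (P k ↔ Q k)) :
    maxSat P m = maxSat Q m := by
  unfold maxSat
  have hPQ : (Finset.Icc 1 m).filter P = (Finset.Icc 1 m).filter Q := by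
    ext k
    simp only [Finset.mem_filter, Finset.mem_Icc]
    exact and_congr_right (fun hk => h k hk.1 hk.2)
  simp only [hPQ]

lemma KfC_congr {τ : ℝ} {m : ℕ} {s s' : ℕ → Bool} (h : ∀ i ∈ Finset.Icc 1 m, s i = s' i) :
    KfC τ m s = KfC τ m s' := by
  unfold KfC
  apply maxSat_congr
  intro k h1 h2
  unfold condC
  rw [apC_congr (fun i hi => h i (Finset.Icc_subset_Icc le_rfl h2 hi)),
    amC_congr (fun i hi => h i (Finset.Icc_subset_Icc le_rfl h2 hi))]

lemma vxC_congr {H0 : Finset ℕ} {m : ℕ} (hH0 : H0 ⊆ Finset.Icc 1 m) {j k : ℕ}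
    {s s' : ℕ → Bool} (h : ∀ i ∈ Finset.Icc 1 m, s i = s' i) :
    vxC H0 j k s = vxC H0 j k s' := by
  unfold vxC
  congr 1
  ext i
  simp only [Finset.mem_filter]
  exact and_congr_right (fun hi => by rw [h i (hH0 hi)])

lemma gphiC_congr {τ : ℝ} {m : ℕ} {H0 : Finset ℕ} (hH0 : H0 ⊆ Finset.Icc 1 m) {j : ℕ}
    {s s' : ℕ → Bool} (h : ∀ i ∈ Finset.Icc 1 m, i ≠ j → s i = s' i) :
    gphiC τ m H0 j s = gphiC τ m H0 j s' := by
  have hflip : ∀ i ∈ Finset.Icc 1 m, flipC j s i = flipC j s' i := by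
    intro i hi
    unfold flipC
    by_cases hij : i = j
    · rw [if_pos hij, if_pos hij]
    · rw [if_neg hij, if_neg hij]
      exact h i hi hij
  have hK : KfC τ m (flipC j s) = KfC τ m (flipC j s') := KfC_congr hflip
  unfold gphiC
  rw [hK, vxC_congr hH0 hflip]

/-- `ω ↦ gphiC τ m H0 j (sign vector of ω)` is measurable with respect to the σ-algebra
generated by the signs away from `j`. -/
lemma gphi_comap_measurable {Ω : Type*} [inst : MeasurableSpace Ω] (m : ℕ) (c τ : ℝ)
    (pv : ℕ → Ω → ℝ) (H0 : Finset ℕ) (hH0 : H0 ⊆ Finset.Icc 1 m) (j : ℕ) :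
    Measurable[MeasurableSpace.comap (fun ω => fun i : {i // i ∈ Finset.Icc 1 m ∧ i ≠ j} =>
      if pv i.1 ω ≤ c then (1 : ℝ) else 0) inferInstance]
      (fun ω => gphiC τ m H0 j (fun i => if pv i ω ≤ c then true else false)) := by
  haveI hfin : Finite {i // i ∈ Finset.Icc 1 m ∧ i ≠ j} := by
    refine Finite.of_injective
      (fun x : {i // i ∈ Finset.Icc 1 m ∧ i ≠ j} => (⟨x.1, x.2.1⟩ : {i // i ∈ Finset.Icc 1 m}))
      ?_
    intro x y hxy
    rw [Subtype.ext_iff] at hxy ⊢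
    exact hxy
  set toB : ({i // i ∈ Finset.Icc 1 m ∧ i ≠ j} → ℝ) → ({i // i ∈ Finset.Icc 1 m ∧ i ≠ j} → Bool) :=
    fun v i => if v i = 1 then true else false with htoB
  have htoBm : Measurable toB := by
    apply measurable_pi_lambda
    intro i
    have h1 : Measurable (fun x : ℝ => if x = 1 then true else false) :=
      Measurable.ite (measurableSet_eq) measurable_const measurable_const
    exact h1.comp (measurable_pi_apply i)
  set Ψ : ({i // i ∈ Finset.Icc 1 m ∧ i ≠ j} → Bool) → ℝ := fun w => gphiC τ m H0 j
      (fun i => if h : i ∈ Finset.Icc 1 m ∧ i ≠ j then w ⟨i, h⟩ else false) with hΨ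
  have hΨm : Measurable Ψ := measurable_of_countable Ψ
  have hcomp : (fun ω => gphiC τ m H0 j (fun i => if pv i ω ≤ c then true else false))
      = (Ψ ∘ toB) ∘ (fun ω => fun i : {i // i ∈ Finset.Icc 1 m ∧ i ≠ j} =>
          if pv i.1 ω ≤ c then (1 : ℝ) else 0) := by
    funext ω
    simp only [Function.comp_apply, hΨ]
    apply gphiC_congr hH0
    intro i hi hij
    rw [dif_pos ⟨hi, hij⟩]
    by_cases hpv : pv i ω ≤ c
    · simp only [htoB, if_pos hpv]
      norm_num
    · simp only [htoB, if_neg hpv]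
      norm_num
  rw [hcomp]
  exact (hΨm.comp htoBm).comp (measurable_iff_comap_le.mpr le_rfl)

/-- sign vector of the p-values at level `c` -/
noncomputable def sgnD {Ω : Type*} (c : ℝ) (pv : ℕ → Ω → ℝ) (ω : Ω) : ℕ → Bool :=
  fun i => if pv i ω ≤ c then true else false

/-- indicator that the conditional rejection probability of `j` is at most `r` -/
noncomputable def bfunD {Ω : Type*} [MeasurableSpace Ω] (μ : Measure Ω) (m : ℕ) (c r : ℝ)
    (pv : ℕ → Ω → ℝ) (j : ℕ) (ω : Ω) : ℝ :=
  if (μ[Set.indicator {ω' | pv j ω' ≤ c} (fun _ => (1 : ℝ)) |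
      MeasurableSpace.comap (fun ω' => fun i : {i // i ∈ Finset.Icc 1 m ∧ i ≠ j} =>
        if pv i.1 ω' ≤ c then (1 : ℝ) else 0) inferInstance]) ω ≤ r then 1 else 0

noncomputable def GfunD {Ω : Type*} [MeasurableSpace Ω] (μ : Measure Ω) (m : ℕ) (c r τ : ℝ)
    (pv : ℕ → Ω → ℝ) (H0 : Finset ℕ) (j : ℕ) (ω : Ω) : ℝ :=
  bfunD μ m c r pv j ω * gphiC τ m H0 j (sgnD c pv ω)

noncomputable def TfunD {Ω : Type*} [MeasurableSpace Ω] (μ : Measure Ω) (m : ℕ) (c r τ : ℝ)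
    (pv : ℕ → Ω → ℝ) (H0 : Finset ℕ) (j : ℕ) (ω : Ω) : ℝ :=
  (if pv j ω ≤ c then (1:ℝ) else 0) * GfunD μ m c r τ pv H0 j ω

end SeqStepAux

set_option maxHeartbeats 2000000 in
open SeqStepAux in
/-- Theorem 2.1 (almost independent p-values): if
`a_j = P(p_j ≤ c | 1{p_{-j} ≤ c})` satisfies `P(max_{j ∈ H₀} a_j ≤ c + δ) ≥ 1 - ε`
with `c + δ < 1`, then Selective SeqStep+ at level `q` satisfies
`FDR ≤ q ((c+δ)/c) ((1-c)/(1-c-δ)) + ε`. -/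
theorem seqstep_fdr_almost_independent
    {Ω : Type*} [MeasurableSpace Ω] (μ : Measure Ω) [IsProbabilityMeasure μ]
    (m : ℕ) (c q δ ε : ℝ)
    (hc : 0 < c) (hc1 : c < 1) (hq : 0 < q) (hq1 : q < 1)
    (hδ : 0 ≤ δ) (hε : 0 ≤ ε) (hcδ : c + δ < 1)
    (pv : ℕ → Ω → ℝ) (hmeas : ∀ j, Measurable (pv j))
    (H0 : Finset ℕ) (hH0 : H0 ⊆ Finset.Icc 1 m)
    (a : ℕ → Ω → ℝ) (hameas : ∀ j, Measurable (a j))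
    -- `a j` is the conditional probability of `{p_j ≤ c}` given the indicator vector
    -- `1{p_i ≤ c}, i ≠ j`:
    (ha : ∀ j ∈ H0, a j =ᵐ[μ]
      μ[Set.indicator {ω | pv j ω ≤ c} (fun _ => (1 : ℝ)) |
        MeasurableSpace.comap
          (fun ω => fun i : {i // i ∈ Finset.Icc 1 m ∧ i ≠ j} =>
            if pv i.1 ω ≤ c then (1 : ℝ) else 0)
          inferInstance])
    (hamax : ENNReal.ofReal (1 - ε) ≤ μ {ω | ∀ j ∈ H0, a j ω ≤ c + δ})
    (khat : Ω → ℕ) (hkmeas : Measurable khat)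
    -- `khat` is the Selective SeqStep+ threshold (pathwise), 0 if no valid k exists:
    (hkhat : ∀ ω, khat ω ≤ m ∧
      (khat ω = 0 ∨
        (1 + (((Finset.Icc 1 (khat ω)).filter (fun j => c < pv j ω)).card : ℝ)) /
            max (((Finset.Icc 1 (khat ω)).filter (fun j => pv j ω ≤ c)).card : ℝ) 1 ≤
          (1 - c) / c * q) ∧
      ∀ k, 1 ≤ k → k ≤ m →
        (1 + (((Finset.Icc 1 k).filter (fun j => c < pv j ω)).card : ℝ)) /
            max (((Finset.Icc 1 k).filter (fun j => pv j ω ≤ c)).card : ℝ) 1 ≤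
          (1 - c) / c * q → k ≤ khat ω) :
    -- FDR = E[ #(null rejections) / (#(rejections) ∨ 1) ]
    ∫ ω, (((H0.filter (fun j => j ≤ khat ω ∧ pv j ω ≤ c)).card : ℝ) /
        max (((Finset.Icc 1 (khat ω)).filter (fun j => pv j ω ≤ c)).card : ℝ) 1) ∂μ ≤
      q * ((c + δ) / c) * ((1 - c) / (1 - c - δ)) + ε := by
  classical
  have h1c : (0:ℝ) < 1 - c := by linarith
  have hτpos : (0:ℝ) < (1 - c) / c * q := mul_pos (div_pos h1c hc) hq
  have hr0 : (0:ℝ) < c + δ := by linarith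
  have hr1 : c + δ < 1 := hcδ
  set τ : ℝ := (1 - c) / c * q with hτdef
  set r : ℝ := c + δ with hrdef
  -- sign translation
  have hsgn_true : ∀ (ω : Ω) (i : ℕ), (sgnD c pv ω i = true) ↔ pv i ω ≤ c := by
    intro ω i
    unfold sgnD
    by_cases h : pv i ω ≤ c <;> simp [h]
  have hsgn_false : ∀ (ω : Ω) (i : ℕ), (sgnD c pv ω i = false) ↔ c < pv i ω := by
    intro ω i
    rw [← not_le, ← hsgn_true ω i]
    cases h : sgnD c pv ω i <;> simp
  have cardA : ∀ (ω : Ω) (k : ℕ), ((Finset.Icc 1 k).filter (fun j => pv j ω ≤ c)).card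
      = apC (sgnD c pv ω) k := by
    intro ω k
    unfold apC
    congr 1
    ext i
    simp only [Finset.mem_filter]
    exact and_congr_right (fun _ => (hsgn_true ω i).symm)
  have cardB : ∀ (ω : Ω) (k : ℕ), ((Finset.Icc 1 k).filter (fun j => c < pv j ω)).card
      = amC (sgnD c pv ω) k := by
    intro ω k
    unfold amC
    congr 1
    ext i
    simp only [Finset.mem_filter]
    exact and_congr_right (fun _ => (hsgn_false ω i).symm)
  have condEq : ∀ (ω : Ω) (k : ℕ),
      ((1 + (((Finset.Icc 1 k).filter (fun j => c < pv j ω)).card : ℝ)) /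
        max (((Finset.Icc 1 k).filter (fun j => pv j ω ≤ c)).card : ℝ) 1 ≤ τ)
      ↔ condC τ (sgnD c pv ω) k := by
    intro ω k
    unfold condC
    rw [cardA, cardB]
  -- identification of khat with the combinatorial stopping rule
  have hkK : ∀ ω, khat ω = KfC τ m (sgnD c pv ω) := by
    intro ω
    obtain ⟨hm1, hm2, hm3⟩ := hkhat ω
    unfold KfC
    by_cases h0 : khat ω = 0
    · rw [h0]
      by_contra hne
      have h1' : 1 ≤ maxSat (condC τ (sgnD c pv ω)) m := by omega
      have hcnd := maxSat_spec h1'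
      have := hm3 _ h1' (maxSat_le _ _) ((condEq ω _).mpr hcnd)
      omega
    · have hk1 : 1 ≤ khat ω := by omega
      have hcondk : condC τ (sgnD c pv ω) (khat ω) := (condEq ω _).mp (hm2.resolve_left h0)
      have hle1 : khat ω ≤ maxSat (condC τ (sgnD c pv ω)) m := le_maxSat hk1 hm1 hcondk
      have h1' : 1 ≤ maxSat (condC τ (sgnD c pv ω)) m := le_trans hk1 hle1
      have hge := hm3 _ h1' (maxSat_le _ _) ((condEq ω _).mpr (maxSat_spec h1'))
      omega
  -- measurability bundle
  have hSetA : ∀ j : ℕ, MeasurableSet {ω' : Ω | pv j ω' ≤ c} :=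
    fun j => measurableSet_le (hmeas j) measurable_const
  have hFmeas : ∀ j : ℕ, Measurable (fun ω' => fun i : {i // i ∈ Finset.Icc 1 m ∧ i ≠ j} =>
      if pv i.1 ω' ≤ c then (1 : ℝ) else 0) := by
    intro j
    apply measurable_pi_lambda
    intro i
    exact Measurable.ite (hSetA i.1) measurable_const measurable_const
  have hle : ∀ j : ℕ,
      (MeasurableSpace.comap (fun ω' => fun i : {i // i ∈ Finset.Icc 1 m ∧ i ≠ j} =>
        if pv i.1 ω' ≤ c then (1 : ℝ) else 0) inferInstance) ≤ ‹MeasurableSpace Ω› :=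
    fun j => measurable_iff_comap_le.mp (hFmeas j)
  have hbm : ∀ j : ℕ,
      Measurable[MeasurableSpace.comap (fun ω' => fun i : {i // i ∈ Finset.Icc 1 m ∧ i ≠ j} =>
        if pv i.1 ω' ≤ c then (1 : ℝ) else 0) inferInstance] (bfunD μ m c r pv j) := by
    intro j
    unfold bfunD
    exact Measurable.ite (measurableSet_le stronglyMeasurable_condExp.measurable measurable_const)
      measurable_const measurable_const
  have hgm : ∀ j : ℕ,
      Measurable[MeasurableSpace.comap (fun ω' => fun i : {i // i ∈ Finset.Icc 1 m ∧ i ≠ j} =>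
        if pv i.1 ω' ≤ c then (1 : ℝ) else 0) inferInstance]
        (fun ω => gphiC τ m H0 j (sgnD c pv ω)) :=
    fun j => gphi_comap_measurable m c τ pv H0 hH0 j
  have hGm : ∀ j : ℕ,
      Measurable[MeasurableSpace.comap (fun ω' => fun i : {i // i ∈ Finset.Icc 1 m ∧ i ≠ j} =>
        if pv i.1 ω' ≤ c then (1 : ℝ) else 0) inferInstance] (GfunD μ m c r τ pv H0 j) :=
    fun j => (hbm j).mul (hgm j)
  have hGmain : ∀ j : ℕ, Measurable (GfunD μ m c r τ pv H0 j) :=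
    fun j => (hGm j).mono (hle j) le_rfl
  have hb0 : ∀ (j : ℕ) (ω : Ω), 0 ≤ bfunD μ m c r pv j ω := by
    intro j ω; unfold bfunD; split <;> norm_num
  have hb1 : ∀ (j : ℕ) (ω : Ω), bfunD μ m c r pv j ω ≤ 1 := by
    intro j ω; unfold bfunD; split <;> norm_num
  have hG0 : ∀ (j : ℕ) (ω : Ω), 0 ≤ GfunD μ m c r τ pv H0 j ω :=
    fun j ω => mul_nonneg (hb0 j ω) (gphiC_nonneg τ m H0 j (sgnD c pv ω))
  have hG1 : ∀ (j : ℕ) (ω : Ω), GfunD μ m c r τ pv H0 j ω ≤ 1 := by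
    intro j ω
    unfold GfunD
    calc bfunD μ m c r pv j ω * gphiC τ m H0 j (sgnD c pv ω) ≤ 1 * 1 :=
          mul_le_mul (hb1 j ω) (gphiC_le_one τ m H0 j (sgnD c pv ω))
            (gphiC_nonneg τ m H0 j (sgnD c pv ω)) zero_le_one
      _ = 1 := one_mul 1
  have hT0 : ∀ (j : ℕ) (ω : Ω), 0 ≤ TfunD μ m c r τ pv H0 j ω := by
    intro j ω
    unfold TfunD
    apply mul_nonneg _ (hG0 j ω)
    split <;> norm_num
  have hT1 : ∀ (j : ℕ) (ω : Ω), TfunD μ m c r τ pv H0 j ω ≤ 1 := by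
    intro j ω
    unfold TfunD
    calc (if pv j ω ≤ c then (1:ℝ) else 0) * GfunD μ m c r τ pv H0 j ω ≤ 1 * 1 := by
          apply mul_le_mul _ (hG1 j ω) (hG0 j ω) zero_le_one
          split <;> norm_num
      _ = 1 := one_mul 1
  have hTmain : ∀ j : ℕ, Measurable (TfunD μ m c r τ pv H0 j) :=
    fun j => (Measurable.ite (hSetA j) measurable_const measurable_const).mul (hGmain j)
  have hTint : ∀ j : ℕ, Integrable (TfunD μ m c r τ pv H0 j) μ := by
    intro j
    refine integrable_of_bounded (μ := μ) 1 (hTmain j) (fun ω => ?_)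
    rw [abs_of_nonneg (hT0 j ω)]
    exact hT1 j ω
  have hGint : ∀ j : ℕ, Integrable (GfunD μ m c r τ pv H0 j) μ := by
    intro j
    refine integrable_of_bounded (μ := μ) 1 (hGmain j) (fun ω => ?_)
    rw [abs_of_nonneg (hG0 j ω)]
    exact hG1 j ω
  -- the conditional-expectation inequality, per null j
  have hkey : ∀ j ∈ H0, ∫ ω, TfunD μ m c r τ pv H0 j ω ∂μ ≤
      r * ∫ ω, GfunD μ m c r τ pv H0 j ω ∂μ := by
    intro j _
    have hres := key_condexp_bound μ (hle j) hr0.le (hSetA j) (hgm j)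
      (fun ω => gphiC_nonneg τ m H0 j (sgnD c pv ω))
      (fun ω => gphiC_le_one τ m H0 j (sgnD c pv ω))
    have e1 : ∀ ω, TfunD μ m c r τ pv H0 j ω =
        (Set.indicator {ω' : Ω | pv j ω' ≤ c} (fun _ => (1:ℝ)) ω) *
        ((if (μ[Set.indicator {ω' : Ω | pv j ω' ≤ c} (fun _ => (1:ℝ)) |
            MeasurableSpace.comap (fun ω' => fun i : {i // i ∈ Finset.Icc 1 m ∧ i ≠ j} =>
              if pv i.1 ω' ≤ c then (1 : ℝ) else 0) inferInstance]) ω ≤ r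
          then (1:ℝ) else 0) * gphiC τ m H0 j (sgnD c pv ω)) := by
      intro ω
      unfold TfunD GfunD bfunD
      by_cases h : pv j ω ≤ c <;>
        simp [Set.indicator_apply, Set.mem_setOf_eq, h]
    have e2 : ∀ ω, GfunD μ m c r τ pv H0 j ω =
        ((if (μ[Set.indicator {ω' : Ω | pv j ω' ≤ c} (fun _ => (1:ℝ)) |
            MeasurableSpace.comap (fun ω' => fun i : {i // i ∈ Finset.Icc 1 m ∧ i ≠ j} =>
              if pv i.1 ω' ≤ c then (1 : ℝ) else 0) inferInstance]) ω ≤ r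
          then (1:ℝ) else 0) * gphiC τ m H0 j (sgnD c pv ω)) := by
      intro ω
      unfold GfunD bfunD
      rfl
    simp only [e1, e2]
    exact hres
  -- the ghost bound, pathwise
  have hGsum_le : ∀ ω : Ω, ∑ j ∈ H0, GfunD μ m c r τ pv H0 j ω ≤
      1 + ∑ j ∈ H0, TfunD μ m c r τ pv H0 j ω := by
    intro ω
    have hsplit := Finset.sum_filter_add_sum_filter_not H0 (fun j => pv j ω ≤ c)
      (fun j => GfunD μ m c r τ pv H0 j ω)
    have e1 : ∑ j ∈ H0.filter (fun j => pv j ω ≤ c), GfunD μ m c r τ pv H0 j ω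
        = ∑ j ∈ H0, TfunD μ m c r τ pv H0 j ω := by
      rw [Finset.sum_filter]
      apply Finset.sum_congr rfl
      intro j _
      unfold TfunD
      by_cases h : pv j ω ≤ c <;> simp [h]
    have e2 : ∑ j ∈ H0.filter (fun j => ¬ pv j ω ≤ c), GfunD μ m c r τ pv H0 j ω ≤ 1 := by
      have hset : H0.filter (fun j => ¬ pv j ω ≤ c)
          = H0.filter (fun j => sgnD c pv ω j = false) := by
        ext i
        simp only [Finset.mem_filter]
        exact and_congr_right (fun _ => by rw [hsgn_false ω i, not_le])
      rw [hset]
      have hg := ghost_sum_le_one τ m H0 hH0 (sgnD c pv ω) (fun j => bfunD μ m c r pv j ω)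
        (fun j => hb0 j ω) (fun j => hb1 j ω)
      exact hg
    linarith [hsplit, e1, e2]
  -- the key expectation bound
  have hRint : Integrable (fun ω => ∑ j ∈ H0, TfunD μ m c r τ pv H0 j ω) μ :=
    integrable_finset_sum _ (fun j _ => hTint j)
  have hGSint : Integrable (fun ω => ∑ j ∈ H0, GfunD μ m c r τ pv H0 j ω) μ :=
    integrable_finset_sum _ (fun j _ => hGint j)
  have hI : ∫ ω, (∑ j ∈ H0, TfunD μ m c r τ pv H0 j ω) ∂μ ≤ r / (1 - r) := by
    have h1 : ∫ ω, (∑ j ∈ H0, TfunD μ m c r τ pv H0 j ω) ∂μ ≤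
        r * (1 + ∫ ω, (∑ j ∈ H0, TfunD μ m c r τ pv H0 j ω) ∂μ) := by
      calc ∫ ω, (∑ j ∈ H0, TfunD μ m c r τ pv H0 j ω) ∂μ
          = ∑ j ∈ H0, ∫ ω, TfunD μ m c r τ pv H0 j ω ∂μ :=
            integral_finset_sum H0 (fun j _ => hTint j)
        _ ≤ ∑ j ∈ H0, r * ∫ ω, GfunD μ m c r τ pv H0 j ω ∂μ := Finset.sum_le_sum hkey
        _ = r * ∑ j ∈ H0, ∫ ω, GfunD μ m c r τ pv H0 j ω ∂μ := (Finset.mul_sum _ _ _).symm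
        _ = r * ∫ ω, (∑ j ∈ H0, GfunD μ m c r τ pv H0 j ω) ∂μ := by
            rw [integral_finset_sum H0 (fun j _ => hGint j)]
        _ ≤ r * ∫ ω, (1 + ∑ j ∈ H0, TfunD μ m c r τ pv H0 j ω) ∂μ := by
            apply mul_le_mul_of_nonneg_left _ hr0.le
            exact integral_mono hGSint ((integrable_const 1).add hRint) hGsum_le
        _ = r * (1 + ∫ ω, (∑ j ∈ H0, TfunD μ m c r τ pv H0 j ω) ∂μ) := by
            rw [integral_add (integrable_const 1) hRint, integral_const]
            simp [measure_univ]
    have h1r : (0:ℝ) < 1 - r := by rw [hrdef]; linarith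
    rw [le_div_iff₀ h1r]
    nlinarith [h1]
  -- the good event
  set E : Set Ω := {ω | ∀ j ∈ H0, a j ω ≤ r} with hEdef
  have hEmeas : MeasurableSet E := by
    have hEeq : E = ⋂ j ∈ (H0 : Set ℕ), {ω | a j ω ≤ r} := by
      ext ω
      simp only [hEdef, Set.mem_setOf_eq, Set.mem_iInter, Finset.mem_coe]
    rw [hEeq]
    exact MeasurableSet.biInter (Set.to_countable _)
      (fun j _ => measurableSet_le (hameas j) measurable_const)
  have hμEc : (μ Eᶜ).toReal ≤ ε := by
    have h1 : μ Eᶜ ≤ ENNReal.ofReal ε := by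
      rw [prob_compl_eq_one_sub hEmeas]
      by_cases hε1 : ε ≤ 1
      · rw [tsub_le_iff_right]
        have h2 : (1 : ENNReal) = ENNReal.ofReal (1 - ε) + ENNReal.ofReal ε := by
          rw [← ENNReal.ofReal_add (by linarith) hε]
          norm_num
        rw [h2, add_comm (ENNReal.ofReal (1 - ε))]
        exact add_le_add_right hamax _
      · exact le_trans tsub_le_self (ENNReal.one_le_ofReal.mpr (le_of_not_ge hε1))
    exact ENNReal.toReal_le_of_le_ofReal hε h1
  -- a.e. identification of a with the conditional expectation
  have haeq : ∀ᵐ ω ∂μ, ∀ j, j ∈ H0 → a j ω =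
      (μ[Set.indicator {ω' : Ω | pv j ω' ≤ c} (fun _ => (1:ℝ)) |
        MeasurableSpace.comap (fun ω' => fun i : {i // i ∈ Finset.Icc 1 m ∧ i ≠ j} =>
          if pv i.1 ω' ≤ c then (1 : ℝ) else 0) inferInstance]) ω := by
    rw [ae_all_iff]
    intro j
    by_cases hj : j ∈ H0
    · filter_upwards [ha j hj] with ω hω
      intro _
      exact hω
    · exact Filter.Eventually.of_forall (fun ω hj' => absurd hj' hj)
  -- pointwise master inequality (a.e.)
  have hmaster : ∀ᵐ ω ∂μ,
      (((H0.filter (fun j => j ≤ khat ω ∧ pv j ω ≤ c)).card : ℝ) /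
        max (((Finset.Icc 1 (khat ω)).filter (fun j => pv j ω ≤ c)).card : ℝ) 1) ≤
      τ * (∑ j ∈ H0, TfunD μ m c r τ pv H0 j ω) +
        Set.indicator Eᶜ (fun _ => (1:ℝ)) ω := by
    filter_upwards [haeq] with ω hωeq
    have hRsum0 : 0 ≤ ∑ j ∈ H0, TfunD μ m c r τ pv H0 j ω :=
      Finset.sum_nonneg (fun j _ => hT0 j ω)
    have hsubVR : H0.filter (fun j => j ≤ khat ω ∧ pv j ω ≤ c) ⊆
        (Finset.Icc 1 (khat ω)).filter (fun j => pv j ω ≤ c) := by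
      intro i hi
      rw [Finset.mem_filter] at hi ⊢
      obtain ⟨hiH, hik, hip⟩ := hi
      exact ⟨Finset.mem_Icc.mpr ⟨(Finset.mem_Icc.mp (hH0 hiH)).1, hik⟩, hip⟩
    by_cases hωE : ω ∈ E
    · -- good event: the real bound
      rw [Set.indicator_of_notMem (by simpa using hωE), add_zero]
      have hbone : ∀ j ∈ H0, bfunD μ m c r pv j ω = 1 := by
        intro j hj
        unfold bfunD
        rw [if_pos]
        rw [← hωeq j hj]
        exact hωE j hj
      -- value of the sum
      have hTval : ∀ j ∈ H0, TfunD μ m c r τ pv H0 j ω =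
          if (j ≤ khat ω ∧ pv j ω ≤ c) then
            (1 + ((H0.filter (fun i => i ≤ khat ω ∧ c < pv i ω)).card : ℝ))⁻¹ else 0 := by
        intro j hj
        unfold TfunD GfunD
        by_cases hpv : pv j ω ≤ c
        · rw [if_pos hpv, one_mul, hbone j hj, one_mul]
          have hst : sgnD c pv ω j = true := (hsgn_true ω j).mpr hpv
          have hflip : flipC j (sgnD c pv ω) = sgnD c pv ω := flipC_eq_self hst
          unfold gphiC
          rw [hflip, ← hkK ω]
          have hvx : vxC H0 j (khat ω) (sgnD c pv ω)
              = (H0.filter (fun i => i ≤ khat ω ∧ c < pv i ω)).card := by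
            unfold vxC
            congr 1
            ext i
            simp only [Finset.mem_filter]
            constructor
            · rintro ⟨hiH, hik, hij, hif⟩
              exact ⟨hiH, hik, (hsgn_false ω i).mp hif⟩
            · rintro ⟨hiH, hik, hic⟩
              refine ⟨hiH, hik, ?_, (hsgn_false ω i).mpr hic⟩
              rintro rfl
              exact absurd hpv (not_le.mpr hic)
          rw [hvx]
          by_cases hjk : j ≤ khat ω
          · rw [if_pos hjk, if_pos ⟨hjk, hpv⟩]
          · rw [if_neg hjk, if_neg (fun h => hjk h.1)]
        · rw [if_neg hpv, zero_mul, if_neg (fun h => hpv h.2)]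
      have hRdelω : ∑ j ∈ H0, TfunD μ m c r τ pv H0 j ω =
          ((H0.filter (fun j => j ≤ khat ω ∧ pv j ω ≤ c)).card : ℝ) *
            (1 + ((H0.filter (fun i => i ≤ khat ω ∧ c < pv i ω)).card : ℝ))⁻¹ := by
        rw [Finset.sum_congr rfl hTval, Finset.sum_ite, Finset.sum_const_zero, add_zero,
          Finset.sum_const, nsmul_eq_mul]
      rcases Nat.eq_zero_or_pos (H0.filter (fun j => j ≤ khat ω ∧ pv j ω ≤ c)).card with
        hV0 | hVpos
      · rw [hV0]
        rw [Nat.cast_zero, zero_div]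
        have : 0 ≤ ∑ j ∈ H0, TfunD μ m c r τ pv H0 j ω := hRsum0
        positivity
      · obtain ⟨j0, hj0⟩ := Finset.card_pos.mp hVpos
        rw [Finset.mem_filter] at hj0
        obtain ⟨hj0H, hj0k, hj0pv⟩ := hj0
        have hj01 : 1 ≤ j0 := (Finset.mem_Icc.mp (hH0 hj0H)).1
        have hκ1 : 1 ≤ khat ω := le_trans hj01 hj0k
        have hκ0 : khat ω ≠ 0 := by omega
        obtain ⟨hm1, hm2, hm3⟩ := hkhat ω
        have hcondκ := hm2.resolve_left hκ0
        have hRpos : 1 ≤ ((Finset.Icc 1 (khat ω)).filter (fun j => pv j ω ≤ c)).card := by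
          apply Finset.card_pos.mpr
          exact ⟨j0, Finset.mem_filter.mpr
            ⟨Finset.mem_Icc.mpr ⟨hj01, hj0k⟩, hj0pv⟩⟩
        have hR1 : (1:ℝ) ≤ (((Finset.Icc 1 (khat ω)).filter (fun j => pv j ω ≤ c)).card : ℝ) := by
          exact_mod_cast hRpos
        have hmaxR : max (((Finset.Icc 1 (khat ω)).filter (fun j => pv j ω ≤ c)).card : ℝ) 1
            = (((Finset.Icc 1 (khat ω)).filter (fun j => pv j ω ≤ c)).card : ℝ) :=
          max_eq_left hR1
        have hWAm : (H0.filter (fun i => i ≤ khat ω ∧ c < pv i ω)).card ≤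
            ((Finset.Icc 1 (khat ω)).filter (fun i => c < pv i ω)).card := by
          apply Finset.card_le_card
          intro i hi
          rw [Finset.mem_filter] at hi ⊢
          obtain ⟨hiH, hik, hic⟩ := hi
          exact ⟨Finset.mem_Icc.mpr ⟨(Finset.mem_Icc.mp (hH0 hiH)).1, hik⟩, hic⟩
        have hWAm' : ((H0.filter (fun i => i ≤ khat ω ∧ c < pv i ω)).card : ℝ) ≤
            (((Finset.Icc 1 (khat ω)).filter (fun i => c < pv i ω)).card : ℝ) := by
          exact_mod_cast hWAm
        have hcond' : 1 + ((H0.filter (fun i => i ≤ khat ω ∧ c < pv i ω)).card : ℝ) ≤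
            τ * (((Finset.Icc 1 (khat ω)).filter (fun j => pv j ω ≤ c)).card : ℝ) := by
          rw [hmaxR, div_le_iff₀ (by linarith)] at hcondκ
          linarith
        rw [hRdelω, hmaxR]
        have h1W : (0:ℝ) < 1 + ((H0.filter (fun i => i ≤ khat ω ∧ c < pv i ω)).card : ℝ) := by
          positivity
        have hconv : τ * (((H0.filter (fun j => j ≤ khat ω ∧ pv j ω ≤ c)).card : ℝ) *
            (1 + ((H0.filter (fun i => i ≤ khat ω ∧ c < pv i ω)).card : ℝ))⁻¹)
            = (τ * ((H0.filter (fun j => j ≤ khat ω ∧ pv j ω ≤ c)).card : ℝ)) /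
              (1 + ((H0.filter (fun i => i ≤ khat ω ∧ c < pv i ω)).card : ℝ)) := by
          rw [div_eq_mul_inv]
          ring
        rw [hconv, div_le_div_iff₀ (by linarith) h1W]
        have hVnn : (0:ℝ) ≤ ((H0.filter (fun j => j ≤ khat ω ∧ pv j ω ≤ c)).card : ℝ) :=
          Nat.cast_nonneg _
        calc ((H0.filter (fun j => j ≤ khat ω ∧ pv j ω ≤ c)).card : ℝ) *
              (1 + ((H0.filter (fun i => i ≤ khat ω ∧ c < pv i ω)).card : ℝ))
            ≤ ((H0.filter (fun j => j ≤ khat ω ∧ pv j ω ≤ c)).card : ℝ) *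
              (τ * (((Finset.Icc 1 (khat ω)).filter (fun j => pv j ω ≤ c)).card : ℝ)) :=
              mul_le_mul_of_nonneg_left hcond' hVnn
          _ = τ * ((H0.filter (fun j => j ≤ khat ω ∧ pv j ω ≤ c)).card : ℝ) *
              (((Finset.Icc 1 (khat ω)).filter (fun j => pv j ω ≤ c)).card : ℝ) := by ring
    · -- bad event : FDP ≤ 1
      rw [Set.indicator_of_mem (Set.mem_compl hωE)]
      have hVR : (((H0.filter (fun j => j ≤ khat ω ∧ pv j ω ≤ c)).card : ℝ)) ≤
          max (((Finset.Icc 1 (khat ω)).filter (fun j => pv j ω ≤ c)).card : ℝ) 1 := by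
        refine le_trans ?_ (le_max_left _ _)
        exact_mod_cast Finset.card_le_card hsubVR
      have hFDP1 : (((H0.filter (fun j => j ≤ khat ω ∧ pv j ω ≤ c)).card : ℝ) /
          max (((Finset.Icc 1 (khat ω)).filter (fun j => pv j ω ≤ c)).card : ℝ) 1) ≤ 1 :=
        div_le_one_of_le₀ hVR (le_trans zero_le_one (le_max_right _ _))
      have : 0 ≤ τ * (∑ j ∈ H0, TfunD μ m c r τ pv H0 j ω) :=
        mul_nonneg hτpos.le hRsum0
      linarith
  -- FDP is measurable and integrable
  have hnum_meas : Measurable (fun ω =>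
      ((H0.filter (fun j => j ≤ khat ω ∧ pv j ω ≤ c)).card : ℝ)) := by
    have heq : (fun ω => ((H0.filter (fun j => j ≤ khat ω ∧ pv j ω ≤ c)).card : ℝ))
        = fun ω => ∑ j ∈ H0, if (j ≤ khat ω ∧ pv j ω ≤ c) then (1:ℝ) else 0 := by
      funext ω
      rw [Finset.natCast_card_filter]
    rw [heq]
    apply Finset.measurable_sum
    intro j _
    apply Measurable.ite _ measurable_const measurable_const
    exact MeasurableSet.inter (hkmeas (MeasurableSet.of_discrete)) (hSetA j)
  have hden_meas : Measurable (fun ω =>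
      max (((Finset.Icc 1 (khat ω)).filter (fun j => pv j ω ≤ c)).card : ℝ) 1) := by
    have heq : (fun ω => (((Finset.Icc 1 (khat ω)).filter (fun j => pv j ω ≤ c)).card : ℝ))
        = fun ω => ∑ j ∈ Finset.Icc 1 m, if (j ≤ khat ω ∧ pv j ω ≤ c) then (1:ℝ) else 0 := by
      funext ω
      have hfe : (Finset.Icc 1 (khat ω)).filter (fun j => pv j ω ≤ c)
          = (Finset.Icc 1 m).filter (fun j => j ≤ khat ω ∧ pv j ω ≤ c) := by
        ext i
        constructor
        · intro hmem
          have h1 := (Finset.mem_filter.mp hmem).1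
          have h3 := (Finset.mem_filter.mp hmem).2
          have h1' := Finset.mem_Icc.mp h1
          exact Finset.mem_filter.mpr
            ⟨Finset.mem_Icc.mpr ⟨h1'.1, le_trans h1'.2 (hkhat ω).1⟩, h1'.2, h3⟩
        · intro hmem
          have h1 := (Finset.mem_filter.mp hmem).1
          have h2 := (Finset.mem_filter.mp hmem).2
          have h1' := Finset.mem_Icc.mp h1
          exact Finset.mem_filter.mpr ⟨Finset.mem_Icc.mpr ⟨h1'.1, h2.1⟩, h2.2⟩
      rw [hfe, Finset.natCast_card_filter]
    apply Measurable.max _ measurable_const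
    rw [heq]
    apply Finset.measurable_sum
    intro j _
    apply Measurable.ite _ measurable_const measurable_const
    exact MeasurableSet.inter (hkmeas (MeasurableSet.of_discrete)) (hSetA j)
  have hFDPmeas : Measurable (fun ω =>
      (((H0.filter (fun j => j ≤ khat ω ∧ pv j ω ≤ c)).card : ℝ) /
        max (((Finset.Icc 1 (khat ω)).filter (fun j => pv j ω ≤ c)).card : ℝ) 1)) :=
    hnum_meas.div hden_meas
  have hFDPint : Integrable (fun ω =>
      (((H0.filter (fun j => j ≤ khat ω ∧ pv j ω ≤ c)).card : ℝ) /
        max (((Finset.Icc 1 (khat ω)).filter (fun j => pv j ω ≤ c)).card : ℝ) 1)) μ := by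
    refine integrable_of_bounded (μ := μ) (m : ℝ) hFDPmeas (fun ω => ?_)
    have hden1 : (1:ℝ) ≤ max (((Finset.Icc 1 (khat ω)).filter
        (fun j => pv j ω ≤ c)).card : ℝ) 1 := le_max_right _ _
    have hnum0 : (0:ℝ) ≤ ((H0.filter (fun j => j ≤ khat ω ∧ pv j ω ≤ c)).card : ℝ) :=
      Nat.cast_nonneg _
    rw [abs_of_nonneg (div_nonneg hnum0 (le_trans zero_le_one hden1))]
    calc (((H0.filter (fun j => j ≤ khat ω ∧ pv j ω ≤ c)).card : ℝ) /
          max (((Finset.Icc 1 (khat ω)).filter (fun j => pv j ω ≤ c)).card : ℝ) 1)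
        ≤ ((H0.filter (fun j => j ≤ khat ω ∧ pv j ω ≤ c)).card : ℝ) :=
          div_le_self hnum0 hden1
      _ ≤ (m : ℝ) := by
          have h1 : (H0.filter (fun j => j ≤ khat ω ∧ pv j ω ≤ c)).card ≤ H0.card :=
            Finset.card_filter_le _ _
          have h2 : H0.card ≤ (Finset.Icc 1 m).card := Finset.card_le_card hH0
          have h3 : (Finset.Icc 1 m).card = m := by
            rw [Nat.card_Icc]
            omega
          exact_mod_cast le_trans h1 (h3 ▸ h2)
  have hindint : Integrable (Set.indicator Eᶜ (fun _ => (1:ℝ))) μ :=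
    (integrable_const 1).indicator hEmeas.compl
  have hRHSint : Integrable (fun ω => τ * (∑ j ∈ H0, TfunD μ m c r τ pv H0 j ω) +
      Set.indicator Eᶜ (fun _ => (1:ℝ)) ω) μ :=
    (hRint.const_mul τ).add hindint
  -- final assembly
  have hindval : ∫ ω, Set.indicator Eᶜ (fun _ => (1:ℝ)) ω ∂μ ≤ ε := by
    rw [integral_indicator_const (1:ℝ) hEmeas.compl]
    rw [smul_eq_mul, mul_one]
    exact hμEc
  have hfinal : τ * (r / (1 - r)) = q * ((c + δ) / c) * ((1 - c) / (1 - c - δ)) := by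
    rw [hτdef, hrdef]
    have hne1 : c ≠ 0 := ne_of_gt hc
    have hne2 : (1:ℝ) - (c + δ) ≠ 0 := by linarith
    have hne3 : (1:ℝ) - c - δ ≠ 0 := by linarith
    field_simp
    ring
  show ∫ ω, (((H0.filter (fun j => j ≤ khat ω ∧ pv j ω ≤ c)).card : ℝ) /
      max (((Finset.Icc 1 (khat ω)).filter (fun j => pv j ω ≤ c)).card : ℝ) 1) ∂μ ≤
    q * ((c + δ) / c) * ((1 - c) / (1 - c - δ)) + ε
  calc ∫ ω, (((H0.filter (fun j => j ≤ khat ω ∧ pv j ω ≤ c)).card : ℝ) /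
        max (((Finset.Icc 1 (khat ω)).filter (fun j => pv j ω ≤ c)).card : ℝ) 1) ∂μ
      ≤ ∫ ω, (τ * (∑ j ∈ H0, TfunD μ m c r τ pv H0 j ω) +
          Set.indicator Eᶜ (fun _ => (1:ℝ)) ω) ∂μ :=
        integral_mono_ae hFDPint hRHSint hmaster
    _ = τ * ∫ ω, (∑ j ∈ H0, TfunD μ m c r τ pv H0 j ω) ∂μ +
          ∫ ω, Set.indicator Eᶜ (fun _ => (1:ℝ)) ω ∂μ := by
        rw [integral_add (hRint.const_mul τ) hindint, integral_const_mul]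
    _ ≤ τ * (r / (1 - r)) + ε := by
        have h1 : τ * ∫ ω, (∑ j ∈ H0, TfunD μ m c r τ pv H0 j ω) ∂μ ≤ τ * (r / (1 - r)) :=
          mul_le_mul_of_nonneg_left hI hτpos.le
        linarith [hindval]
    _ = q * ((c + δ) / c) * ((1 - c) / (1 - c - δ)) + ε := by rw [hfinal]
end

section
/- Let $\mathbf{1}\{p_1 \leq c\}, \dots, \mathbf{1}\{p_{n_0} \leq c\}$ be the indicators from the mixture construction: with probability $\pi_1$, a uniformly random subset of size $m_1$ of $\{1, \dots, n_0\}$ has indicator 1 and the rest 0; with probability $\pi_2 = 1 - \pi_1$, a uniformly random subset of size $m_2$ has indicator 1 and the rest 0. Then for $i \neq j$, $\mathrm{Corr}(\mathbf{1}\{p_i \leq c\}, \mathbf{1}\{p_j \leq c\}) = \frac{(m_2 - m_1)^2 \pi_1 \pi_2}{n_0 (n_0 - 1) \mathrm{Var}(\mathbf{1}\{p_i \leq c\})} - \frac{1}{n_0 - 1}$, where $\mathrm{Var}(\mathbf{1}\{p_i \leq c\}) = \bar{c}(1 - \bar{c})$ with $\bar{c} = (m_1 \pi_1 + m_2 \pi_2)/n_0$.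 -/
set_option maxHeartbeats 1000000
open Finset

lemma count_one {α : Type*} [DecidableEq α] (s : Finset α) (i : α) (hi : i ∈ s)
    (m : ℕ) (hm : 1 ≤ m) :
    ((s.powersetCard m).filter (fun S => i ∈ S)).card = (s.card - 1).choose (m - 1) := by
  have h : ((s.powersetCard m).filter (fun S => i ∈ S)).card
      = ((s.erase i).powersetCard (m - 1)).card := by
    refine Finset.card_bij' (fun S _ => S.erase i) (fun T _ => insert i T) ?_ ?_ ?_ ?_
    case refine_1 =>
      intro S hS
      simp only [mem_filter, Finset.mem_powersetCard] at hS
      rw [Finset.mem_powersetCard]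
      refine ⟨fun x hx => ?_, ?_⟩
      · rw [Finset.mem_erase] at hx ⊢
        exact ⟨hx.1, hS.1.1 hx.2⟩
      · rw [Finset.card_erase_of_mem hS.2, hS.1.2]
    · intro T hT
      rw [Finset.mem_powersetCard] at hT
      have hiT : i ∉ T := fun h => (Finset.mem_erase.mp (hT.1 h)).1 rfl
      simp only [mem_filter, Finset.mem_powersetCard]
      refine ⟨⟨Finset.insert_subset hi (hT.1.trans (Finset.erase_subset _ _)), ?_⟩,
        Finset.mem_insert_self _ _⟩
      rw [Finset.card_insert_of_notMem hiT, hT.2]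
      omega
    case refine_3 =>
      intro S hS
      simp only [mem_filter] at hS
      exact Finset.insert_erase hS.2
    case refine_4 =>
      intro T hT
      rw [Finset.mem_powersetCard] at hT
      have hiT : i ∉ T := fun h => (Finset.mem_erase.mp (hT.1 h)).1 rfl
      exact Finset.erase_insert hiT
  rw [h, Finset.card_powersetCard, Finset.card_erase_of_mem hi]
lemma count_two {α : Type*} [DecidableEq α] (s : Finset α) (i j : α) (hi : i ∈ s)
    (hj : j ∈ s) (hij : i ≠ j) (m : ℕ) (hm : 2 ≤ m) :
    ((s.powersetCard m).filter (fun S => i ∈ S ∧ j ∈ S)).card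
      = (s.card - 2).choose (m - 2) := by
  have h : ((s.powersetCard m).filter (fun S => i ∈ S ∧ j ∈ S)).card
      = (((s.erase i).erase j).powersetCard (m - 2)).card := by
    refine Finset.card_bij' (fun S _ => (S.erase i).erase j) (fun T _ => insert i (insert j T))
      ?_ ?_ ?_ ?_
    case refine_1 =>
      intro S hS
      simp only [mem_filter, Finset.mem_powersetCard] at hS
      rw [Finset.mem_powersetCard]
      refine ⟨fun x hx => ?_, ?_⟩
      · rw [Finset.mem_erase] at hx ⊢
        rw [Finset.mem_erase] at hx
        exact ⟨hx.1, Finset.mem_erase.mpr ⟨hx.2.1, hS.1.1 hx.2.2⟩⟩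
      · rw [Finset.card_erase_of_mem (Finset.mem_erase.mpr ⟨(Ne.symm hij), hS.2.2⟩),
          Finset.card_erase_of_mem hS.2.1, hS.1.2]
        omega
    case refine_2 =>
      intro T hT
      rw [Finset.mem_powersetCard] at hT
      have hjT : j ∉ T := fun h => (Finset.mem_erase.mp (hT.1 h)).1 rfl
      have hiT : i ∉ T := fun h =>
        (Finset.mem_erase.mp (Finset.mem_erase.mp (hT.1 h)).2).1 rfl
      have hTs : T ⊆ s := hT.1.trans ((Finset.erase_subset _ _).trans (Finset.erase_subset _ _))
      simp only [mem_filter, Finset.mem_powersetCard]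
      refine ⟨⟨Finset.insert_subset hi (Finset.insert_subset hj hTs), ?_⟩,
        Finset.mem_insert_self _ _, Finset.mem_insert_of_mem (Finset.mem_insert_self _ _)⟩
      rw [Finset.card_insert_of_notMem (by simp [hiT, hij]),
        Finset.card_insert_of_notMem hjT, hT.2]
      omega
    case refine_3 =>
      intro S hS
      simp only [mem_filter] at hS
      show insert i (insert j ((S.erase i).erase j)) = S
      rw [Finset.insert_erase (Finset.mem_erase.mpr ⟨Ne.symm hij, hS.2.2⟩),
        Finset.insert_erase hS.2.1]
    case refine_4 =>
      intro T hT
      rw [Finset.mem_powersetCard] at hT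
      have hjT : j ∉ T := fun h => (Finset.mem_erase.mp (hT.1 h)).1 rfl
      have hiT : i ∉ T := fun h =>
        (Finset.mem_erase.mp (Finset.mem_erase.mp (hT.1 h)).2).1 rfl
      show ((insert i (insert j T)).erase i).erase j = T
      rw [Finset.erase_insert (by simp [hiT, hij]), Finset.erase_insert hjT]
  rw [h, Finset.card_powersetCard, Finset.card_erase_of_mem
    (Finset.mem_erase.mpr ⟨Ne.symm hij, hj⟩), Finset.card_erase_of_mem hi]
  congr 1
lemma choose_ratio_real (n m : ℕ) (hm : 1 ≤ m) (hmn : m ≤ n) :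
    (n : ℝ) * ((n - 1).choose (m - 1)) = (n.choose m : ℝ) * m := by
  have h := Nat.add_one_mul_choose_eq (n - 1) (m - 1)
  rw [show n - 1 + 1 = n by omega, show m - 1 + 1 = m by omega] at h
  exact_mod_cast h

lemma sum_w_one (n m : ℕ) (hm : m ≤ n) :
    ∑ S : Finset (Fin n), (if S.card = m then 1 / (n.choose m : ℝ) else 0) = 1 := by
  classical
  rw [← Finset.sum_filter]
  have hfil : (Finset.univ : Finset (Finset (Fin n))).filter (fun S => S.card = m)
      = Finset.powersetCard m (Finset.univ : Finset (Fin n)) := by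
    ext S; simp [Finset.mem_powersetCard]
  rw [hfil, Finset.sum_const, Finset.card_powersetCard, Finset.card_univ, Fintype.card_fin,
    nsmul_eq_mul]
  have hc : (0 : ℝ) < (n.choose m : ℝ) := by exact_mod_cast Nat.choose_pos hm
  field_simp

lemma sum_w_X (n m : ℕ) (hm : m ≤ n) (hn : 1 ≤ n) (i : Fin n) :
    ∑ S : Finset (Fin n), (if S.card = m then 1 / (n.choose m : ℝ) else 0) *
      (if i ∈ S then 1 else 0) = (m : ℝ) / n := by
  classical
  have hstep : ∀ S : Finset (Fin n),
      (if S.card = m then 1 / (n.choose m : ℝ) else 0) * (if i ∈ S then 1 else 0)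
        = if S.card = m ∧ i ∈ S then 1 / (n.choose m : ℝ) else 0 := by
    intro S; split_ifs with h1 h2 h3 <;> simp_all
  rw [Finset.sum_congr rfl (fun S _ => hstep S), ← Finset.sum_filter, Finset.sum_const,
    nsmul_eq_mul]
  rcases Nat.eq_zero_or_pos m with hm0 | hm1
  · subst hm0
    have : (Finset.univ : Finset (Finset (Fin n))).filter (fun S => S.card = 0 ∧ i ∈ S)
        = ∅ := by
      ext S
      simp only [Finset.mem_filter, Finset.mem_univ, true_and, Finset.notMem_empty, iff_false]
      rintro ⟨h0, hiS⟩
      simp [Finset.card_eq_zero.mp h0] at hiS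
    rw [this]
    simp
  · have hfil : (Finset.univ : Finset (Finset (Fin n))).filter (fun S => S.card = m ∧ i ∈ S)
        = (Finset.powersetCard m (Finset.univ : Finset (Fin n))).filter (fun S => i ∈ S) := by
      ext S; simp [Finset.mem_powersetCard, and_comm]
    rw [hfil, count_one _ _ (Finset.mem_univ i) m hm1, Finset.card_univ, Fintype.card_fin]
    have hc : (0 : ℝ) < (n.choose m : ℝ) := by exact_mod_cast Nat.choose_pos hm
    have hkey := choose_ratio_real n m hm1 hm
    have hn' : (0 : ℝ) < (n : ℝ) := by exact_mod_cast hn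
    field_simp
    linarith [hkey]

lemma sum_w_XX (n m : ℕ) (hm : m ≤ n) (hn : 2 ≤ n) (i j : Fin n) (hij : i ≠ j) :
    ∑ S : Finset (Fin n), (if S.card = m then 1 / (n.choose m : ℝ) else 0) *
      ((if i ∈ S then 1 else 0) * (if j ∈ S then 1 else 0))
      = (m : ℝ) * ((m : ℝ) - 1) / ((n : ℝ) * ((n : ℝ) - 1)) := by
  classical
  have hstep : ∀ S : Finset (Fin n),
      (if S.card = m then 1 / (n.choose m : ℝ) else 0) *
        ((if i ∈ S then (1:ℝ) else 0) * (if j ∈ S then 1 else 0))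
        = if S.card = m ∧ i ∈ S ∧ j ∈ S then 1 / (n.choose m : ℝ) else 0 := by
    intro S; split_ifs <;> simp_all
  rw [Finset.sum_congr rfl (fun S _ => hstep S), ← Finset.sum_filter, Finset.sum_const,
    nsmul_eq_mul]
  rcases Nat.lt_or_ge m 2 with hm2 | hm2
  · have hempty : (Finset.univ : Finset (Finset (Fin n))).filter
        (fun S => S.card = m ∧ i ∈ S ∧ j ∈ S) = ∅ := by
      ext S
      simp only [Finset.mem_filter, Finset.mem_univ, true_and, Finset.notMem_empty, iff_false]
      rintro ⟨h0, hiS, hjS⟩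
      have : 2 ≤ S.card := Finset.one_lt_card.mpr ⟨i, hiS, j, hjS, hij⟩
      omega
    rw [hempty]
    interval_cases m <;> simp
  · have hfil : (Finset.univ : Finset (Finset (Fin n))).filter
        (fun S => S.card = m ∧ i ∈ S ∧ j ∈ S)
        = (Finset.powersetCard m (Finset.univ : Finset (Fin n))).filter
            (fun S => i ∈ S ∧ j ∈ S) := by
      ext S; simp [Finset.mem_powersetCard, and_comm]
    rw [hfil, count_two _ _ _ (Finset.mem_univ i) (Finset.mem_univ j) hij m hm2,
      Finset.card_univ, Fintype.card_fin]
    have hc : (0 : ℝ) < (n.choose m : ℝ) := by exact_mod_cast Nat.choose_pos hm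
    have h1 := choose_ratio_real n m (by omega) hm
    have h2 := choose_ratio_real (n - 1) (m - 1) (by omega) (by omega)
    have hcast1 : ((n - 1 : ℕ) : ℝ) = (n : ℝ) - 1 := by
      push_cast [Nat.cast_sub (by omega : 1 ≤ n)]; ring
    have hcast2 : ((m - 1 : ℕ) : ℝ) = (m : ℝ) - 1 := by
      push_cast [Nat.cast_sub (by omega : 1 ≤ m)]; ring
    have hsub1 : (n - 1 : ℕ) - 1 = n - 2 := by omega
    have hsub2 : (m - 1 : ℕ) - 1 = m - 2 := by omega
    rw [hsub1, hsub2, hcast1, hcast2] at h2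
    have hn' : (0 : ℝ) < (n : ℝ) := by positivity
    have hn1 : (0 : ℝ) < (n : ℝ) - 1 := by
      have : (2:ℝ) ≤ (n:ℝ) := by exact_mod_cast hn
      linarith
    have hc1 : (0 : ℝ) < ((n-1).choose (m-1) : ℝ) := by
      exact_mod_cast Nat.choose_pos (by omega : m - 1 ≤ n - 1)
    field_simp
    nlinarith [h1, h2, hc.le, hc1.le]

open scoped Classical
/-- Exact correlation formula for the two-level random-subset mixture: with probability
`π₁` a uniformly random subset of size `m₁` of `{1,...,n₀}` has indicator 1 (the rest 0),
and with probability `π₂ = 1 - π₁` a uniformly random subset of size `m₂` does. Then the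
indicator variance is `c̄(1-c̄)` with `c̄ = (m₁π₁ + m₂π₂)/n₀`, and for `i ≠ j`,
`Corr(X_i, X_j) = (m₂-m₁)²π₁π₂/(n₀(n₀-1)Var) - 1/(n₀-1)`. -/
theorem random_subset_mixture_correlation
    (n0 : ℕ) (hn0 : 2 ≤ n0) (m1 m2 : ℕ) (hm1 : m1 ≤ n0) (hm2 : m2 ≤ n0)
    (π1 : ℝ) (hπ1 : 0 ≤ π1) (hπ1' : π1 ≤ 1) (i j : Fin n0) (hij : i ≠ j) :
    -- mixture weight of a subset S:
    (∑ S : Finset (Fin n0),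
        (π1 * (if S.card = m1 then 1 / (n0.choose m1 : ℝ) else 0) +
          (1 - π1) * (if S.card = m2 then 1 / (n0.choose m2 : ℝ) else 0)) *
        ((if i ∈ S then (1 : ℝ) else 0) - ((m1 : ℝ) * π1 + m2 * (1 - π1)) / n0) ^ 2 =
      (((m1 : ℝ) * π1 + m2 * (1 - π1)) / n0) *
        (1 - ((m1 : ℝ) * π1 + m2 * (1 - π1)) / n0)) ∧
    ((((m1 : ℝ) * π1 + m2 * (1 - π1)) / n0) *
        (1 - ((m1 : ℝ) * π1 + m2 * (1 - π1)) / n0) ≠ 0 →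
      (∑ S : Finset (Fin n0),
          (π1 * (if S.card = m1 then 1 / (n0.choose m1 : ℝ) else 0) +
            (1 - π1) * (if S.card = m2 then 1 / (n0.choose m2 : ℝ) else 0)) *
          (((if i ∈ S then (1 : ℝ) else 0) - ((m1 : ℝ) * π1 + m2 * (1 - π1)) / n0) *
            ((if j ∈ S then (1 : ℝ) else 0) - ((m1 : ℝ) * π1 + m2 * (1 - π1)) / n0))) /
        ((((m1 : ℝ) * π1 + m2 * (1 - π1)) / n0) *
          (1 - ((m1 : ℝ) * π1 + m2 * (1 - π1)) / n0)) =
      ((m2 : ℝ) - m1) ^ 2 * π1 * (1 - π1) /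
          ((n0 : ℝ) * ((n0 : ℝ) - 1) *
            ((((m1 : ℝ) * π1 + m2 * (1 - π1)) / n0) *
              (1 - ((m1 : ℝ) * π1 + m2 * (1 - π1)) / n0))) -
        1 / ((n0 : ℝ) - 1)) := by
  classical
  set c : ℝ := ((m1 : ℝ) * π1 + m2 * (1 - π1)) / n0 with hc
  have hn0' : ((n0 : ℝ)) ≠ 0 := by
    have : (0:ℝ) < n0 := by exact_mod_cast Nat.lt_of_lt_of_le Nat.zero_lt_two hn0
    linarith
  have hn1' : ((n0 : ℝ)) - 1 ≠ 0 := by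
    have : (2:ℝ) ≤ (n0:ℝ) := by exact_mod_cast hn0
    intro h; linarith
  have A1 := sum_w_one n0 m1 hm1
  have A2 := sum_w_one n0 m2 hm2
  have B1i := sum_w_X n0 m1 hm1 (by omega) i
  have B2i := sum_w_X n0 m2 hm2 (by omega) i
  have B1j := sum_w_X n0 m1 hm1 (by omega) j
  have B2j := sum_w_X n0 m2 hm2 (by omega) j
  have C1 := sum_w_XX n0 m1 hm1 hn0 i j hij
  have C2 := sum_w_XX n0 m2 hm2 hn0 i j hij
  constructor
  · have key : ∀ S : Finset (Fin n0),
        (π1 * (if S.card = m1 then 1 / (n0.choose m1 : ℝ) else 0) +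
          (1 - π1) * (if S.card = m2 then 1 / (n0.choose m2 : ℝ) else 0)) *
          ((if i ∈ S then (1 : ℝ) else 0) - c) ^ 2
        = (π1 * (1 - 2*c)) *
            ((if S.card = m1 then 1 / (n0.choose m1 : ℝ) else 0) *
              (if i ∈ S then (1:ℝ) else 0)) +
          ((1 - π1) * (1 - 2*c)) *
            ((if S.card = m2 then 1 / (n0.choose m2 : ℝ) else 0) *
              (if i ∈ S then (1:ℝ) else 0)) +
          (π1 * c^2) * (if S.card = m1 then 1 / (n0.choose m1 : ℝ) else 0) +
          ((1 - π1) * c^2) * (if S.card = m2 then 1 / (n0.choose m2 : ℝ) else 0) := by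
      intro S
      by_cases h : i ∈ S <;> simp only [h, if_true, if_false] <;> ring
    rw [Finset.sum_congr rfl (fun S _ => key S)]
    rw [Finset.sum_add_distrib, Finset.sum_add_distrib, Finset.sum_add_distrib]
    rw [← Finset.mul_sum, ← Finset.mul_sum, ← Finset.mul_sum, ← Finset.mul_sum]
    rw [A1, A2, B1i, B2i, hc]
    field_simp
    ring
  · intro hV
    have key2 : ∀ S : Finset (Fin n0),
        (π1 * (if S.card = m1 then 1 / (n0.choose m1 : ℝ) else 0) +
          (1 - π1) * (if S.card = m2 then 1 / (n0.choose m2 : ℝ) else 0)) *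
          (((if i ∈ S then (1 : ℝ) else 0) - c) * ((if j ∈ S then (1 : ℝ) else 0) - c))
        = π1 * ((if S.card = m1 then 1 / (n0.choose m1 : ℝ) else 0) *
              ((if i ∈ S then (1:ℝ) else 0) * (if j ∈ S then (1:ℝ) else 0))) +
          (1 - π1) * ((if S.card = m2 then 1 / (n0.choose m2 : ℝ) else 0) *
              ((if i ∈ S then (1:ℝ) else 0) * (if j ∈ S then (1:ℝ) else 0))) +
          (-(c * π1)) * ((if S.card = m1 then 1 / (n0.choose m1 : ℝ) else 0) *
              (if i ∈ S then (1:ℝ) else 0)) +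
          (-(c * (1 - π1))) * ((if S.card = m2 then 1 / (n0.choose m2 : ℝ) else 0) *
              (if i ∈ S then (1:ℝ) else 0)) +
          (-(c * π1)) * ((if S.card = m1 then 1 / (n0.choose m1 : ℝ) else 0) *
              (if j ∈ S then (1:ℝ) else 0)) +
          (-(c * (1 - π1))) * ((if S.card = m2 then 1 / (n0.choose m2 : ℝ) else 0) *
              (if j ∈ S then (1:ℝ) else 0)) +
          (c^2 * π1) * (if S.card = m1 then 1 / (n0.choose m1 : ℝ) else 0) +
          (c^2 * (1 - π1)) * (if S.card = m2 then 1 / (n0.choose m2 : ℝ) else 0) := by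
      intro S
      by_cases h : i ∈ S <;> by_cases h' : j ∈ S <;>
        simp only [h, h', if_true, if_false] <;> ring
    rw [Finset.sum_congr rfl (fun S _ => key2 S)]
    rw [Finset.sum_add_distrib, Finset.sum_add_distrib, Finset.sum_add_distrib,
      Finset.sum_add_distrib, Finset.sum_add_distrib, Finset.sum_add_distrib,
      Finset.sum_add_distrib]
    rw [← Finset.mul_sum, ← Finset.mul_sum, ← Finset.mul_sum, ← Finset.mul_sum,
      ← Finset.mul_sum, ← Finset.mul_sum, ← Finset.mul_sum, ← Finset.mul_sum]
    rw [A1, A2, B1i, B2i, B1j, B2j, C1, C2]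
    rw [div_eq_iff hV]
    have hrhs : (((m2 : ℝ) - m1) ^ 2 * π1 * (1 - π1) /
          ((n0 : ℝ) * ((n0 : ℝ) - 1) * (c * (1 - c))) - 1 / ((n0 : ℝ) - 1)) * (c * (1 - c))
        = ((m2 : ℝ) - m1) ^ 2 * π1 * (1 - π1) / ((n0 : ℝ) * ((n0 : ℝ) - 1))
            - c * (1 - c) / ((n0 : ℝ) - 1) := by
      have hc0 : c ≠ 0 := left_ne_zero_of_mul hV
      have hc1 : 1 - c ≠ 0 := right_ne_zero_of_mul hV
      field_simp
    rw [hrhs, hc]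
    field_simp
    ring
end

section
/- Fix $c, q, \rho$ with $0 < c < 1$, $0 < q < 1$, $0 \leq \rho$, and suppose $\rho \leq \frac{c(1-q)}{q + c(1-q)}$. Set $\alpha = \frac{c}{q + c(1-q)}$, $\beta = \frac{c + (1-c)q}{(1-c)(1-q)}$, $\delta = \rho \frac{c(1-q) + q}{c(1-q)}$. Then $q + \frac{\delta}{1 + \beta\delta}\left[\frac{c}{1-c} - \frac{c - c\delta}{1 - (c - c\delta)} q\right] \leq q + c(1-q)$, i.e., the correlation-dependent FDR bound is at most the worst-case exchangeable bound, with equality at $\rho = \frac{c(1-q)}{q + c(1-q)}$. -/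
lemma key (c q d : ℝ) (hc : 0 < c) (hc1 : c < 1) (hq : 0 < q) (hq1 : q < 1)
    (hd : 0 ≤ d) (hd1 : d ≤ 1) :
    (d / (1 + (c + (1 - c) * q) / ((1 - c) * (1 - q)) * d)) *
      (c / (1 - c) - (c - c * d) / (1 - (c - c * d)) * q) ≤ c * (1 - q) := by
  have hA : (0:ℝ) < 1 - c := by linarith
  have hB : (0:ℝ) < 1 - q := by linarith
  have h1 : (0:ℝ) < 1 - c + c * d := by nlinarith
  have h2 : (0:ℝ) < 1 + (c + (1 - c) * q) / ((1 - c) * (1 - q)) * d := by positivity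
  rw [div_mul_eq_mul_div, div_le_iff₀ h2,
    show (1:ℝ) - (c - c * d) = 1 - c + c * d by ring]
  have hL : d * (c / (1 - c) - (c - c * d) / (1 - c + c * d) * q) =
      (c * d * ((1 - c + c * d) - (1 - c) * (1 - d) * q)) / ((1 - c) * (1 - c + c * d)) := by
    field_simp
  have hR : c * (1 - q) * (1 + (c + (1 - c) * q) / ((1 - c) * (1 - q)) * d) =
      (c * (((1 - c) * (1 - q) + (c + (1 - c) * q) * d) * (1 - c + c * d))) /
        ((1 - c) * (1 - c + c * d)) := by
    field_simp
  rw [hL, hR, div_le_div_iff_of_pos_right (by positivity : (0:ℝ) < (1 - c) * (1 - c + c * d))]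
  have hint : 0 ≤ c * ((1 - c) * (1 - d) * ((1 - c + c * d) - (1 - c) * q * (1 - d))) := by
    have h5 : (0:ℝ) ≤ (1 - c + c * d) - (1 - c) * q * (1 - d) := by nlinarith
    exact mul_nonneg hc.le (mul_nonneg (mul_nonneg hA.le (by linarith)) h5)
  nlinarith [hint]

/-- Comparison of the correlation-dependent FDR bound with the worst-case exchangeable
bound: with `δ = ρ(c(1-q)+q)/(c(1-q))` and `β = (c+(1-c)q)/((1-c)(1-q))`, if
`ρ ≤ c(1-q)/(q+c(1-q))` then
`q + (δ/(1+βδ))[c/(1-c) - ((c-cδ)/(1-(c-cδ)))q] ≤ q + c(1-q)`,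
with equality at `ρ = c(1-q)/(q+c(1-q))`. -/
theorem fdr_bound_comparison
    (c q ρ : ℝ) (hc : 0 < c) (hc1 : c < 1) (hq : 0 < q) (hq1 : q < 1)
    (hρ : 0 ≤ ρ) (hρle : ρ ≤ c * (1 - q) / (q + c * (1 - q))) :
    (q + (ρ * (c * (1 - q) + q) / (c * (1 - q)) /
          (1 + (c + (1 - c) * q) / ((1 - c) * (1 - q)) *
            (ρ * (c * (1 - q) + q) / (c * (1 - q))))) *
        (c / (1 - c) -
          (c - c * (ρ * (c * (1 - q) + q) / (c * (1 - q)))) /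
            (1 - (c - c * (ρ * (c * (1 - q) + q) / (c * (1 - q))))) * q) ≤
      q + c * (1 - q)) ∧
    (ρ = c * (1 - q) / (q + c * (1 - q)) →
      q + (ρ * (c * (1 - q) + q) / (c * (1 - q)) /
            (1 + (c + (1 - c) * q) / ((1 - c) * (1 - q)) *
              (ρ * (c * (1 - q) + q) / (c * (1 - q))))) *
          (c / (1 - c) -
            (c - c * (ρ * (c * (1 - q) + q) / (c * (1 - q)))) /
              (1 - (c - c * (ρ * (c * (1 - q) + q) / (c * (1 - q))))) * q) =
        q + c * (1 - q)) := by
  have hB : (0:ℝ) < 1 - q := by linarith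
  have hA : (0:ℝ) < 1 - c := by linarith
  have hcB : (0:ℝ) < c * (1 - q) := by positivity
  have hqc : (0:ℝ) < q + c * (1 - q) := by positivity
  set d := ρ * (c * (1 - q) + q) / (c * (1 - q)) with hdef
  have hd : 0 ≤ d := by
    apply div_nonneg _ hcB.le
    have : (0:ℝ) ≤ c * (1 - q) + q := by positivity
    exact mul_nonneg hρ this
  have hd1 : d ≤ 1 := by
    rw [hdef, div_le_one hcB]
    have := (le_div_iff₀ hqc).mp hρle
    nlinarith
  constructor
  · have := key c q d hc hc1 hq hq1 hd hd1
    linarith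
  · intro h
    have hde : d = 1 := by
      rw [hdef, h]
      field_simp
      ring
    rw [hde]
    have h2 : (0:ℝ) < 1 + (c + (1 - c) * q) / ((1 - c) * (1 - q)) * 1 := by positivity
    field_simp
    ring
end
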